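/- arXiv:math/0309214 — 6 statements merged into one kernel-verified Lean document; each statement's English description precedes it below -/
import Mathlib

section
/- Let J : ℕ → ℚ(v) be defined by J(0) = 0 and, for n ≥ 1, J(n) = v^{1-n}/(1 - q^{-1}) · Σ_{k=0}^{n-1} q^{-kn} ∏_{j=0}^{k} (1 - q^{j-n}), where q = v². Then J(1) = 1, and for every n ≥ 2 the following three-term recursion holds in ℚ(v): J(n) = ((q^{n-1} + q^{4-4n} - q^{-n} - q^{1-2n}) / (v·(q^{n-1} - q^{2-n}))) · J(n-1) + ((q^{4-4n} - q^{3-2n}) / (q^{2-n} - q^{n-1})) · J(n-2). -/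
/-
The colored Jones function of the 0-framed right-hand trefoil, given by the
single sum J(n) = v^{1-n}/(1-q^{-1}) Σ_{k=0}^{n-1} q^{-kn} ∏_{j=0}^{k} (1-q^{j-n})
(with q = v²), satisfies J(1) = 1 and a three-term recursion.
-/

noncomputable section

namespace Stmt0

/-- The variable `v` of the field ℚ(v). -/
def v : RatFunc ℚ := RatFunc.X

/-- `q = v²`. -/
def q : RatFunc ℚ := v ^ 2

/-- The colored Jones function of the right-hand trefoil. -/
def J (n : ℕ) : RatFunc ℚ :=
  if n = 0 then 0 else
    v ^ (1 - (n : ℤ)) / (1 - q ^ (-1 : ℤ)) *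
      ∑ k ∈ Finset.range n,
        q ^ (-((k : ℤ) * (n : ℤ))) *
          ∏ j ∈ Finset.range (k + 1), (1 - q ^ ((j : ℤ) - (n : ℤ)))

lemma v_ne : v ≠ 0 := RatFunc.X_ne_zero
lemma q_ne : q ≠ 0 := pow_ne_zero 2 v_ne

lemma X_pow_ne_one {n : ℕ} (hn : n ≠ 0) : (RatFunc.X : RatFunc ℚ) ^ n ≠ 1 := by
  intro h
  have h2 : (algebraMap (Polynomial ℚ) (RatFunc ℚ)) (Polynomial.X ^ n) =
      (algebraMap (Polynomial ℚ) (RatFunc ℚ)) 1 := by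
    simpa [map_pow, RatFunc.algebraMap_X] using h
  have h3 : (Polynomial.X : Polynomial ℚ) ^ n = 1 := RatFunc.algebraMap_injective ℚ h2
  have := congrArg Polynomial.natDegree h3
  simp [Polynomial.natDegree_X_pow] at this
  exact hn this

lemma v_zpow_ne_one {z : ℤ} (hz : z ≠ 0) : v ^ z ≠ 1 := by
  rcases lt_trichotomy z 0 with h | h | h
  · intro he
    have h1 : v ^ (-z) = 1 := by
      rw [zpow_neg, he, inv_one]
    rw [show -z = ((-z).toNat : ℤ) by omega, zpow_natCast] at h1
    exact X_pow_ne_one (by omega) h1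
  · exact absurd h hz
  · intro he
    rw [show z = (z.toNat : ℤ) by omega, zpow_natCast] at he
    exact X_pow_ne_one (by omega) he

lemma q_zpow_ne_one {z : ℤ} (hz : z ≠ 0) : q ^ z ≠ 1 := by
  have hqz : q ^ z = v ^ (2 * z) := by
    rw [q, ← zpow_natCast v 2, ← zpow_mul]; norm_num
  rw [hqz]
  exact v_zpow_ne_one (by omega)

lemma q_zpow_ne {z w : ℤ} (h : z ≠ w) : q ^ z ≠ q ^ w := by
  intro he
  apply q_zpow_ne_one (sub_ne_zero.mpr h)
  rw [zpow_sub₀ q_ne, he, div_self (zpow_ne_zero _ q_ne)]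

lemma one_sub_q_zpow_ne {z : ℤ} (hz : z ≠ 0) : (1 : RatFunc ℚ) - q ^ z ≠ 0 :=
  sub_ne_zero.mpr fun he => q_zpow_ne_one hz he.symm

/-- The product part of the summand. -/
def P (k : ℕ) (m : ℤ) : RatFunc ℚ := ∏ j ∈ Finset.range (k + 1), (1 - q ^ ((j : ℤ) - m))

/-- The summand. -/
def a (k : ℕ) (m : ℤ) : RatFunc ℚ := q ^ (-((k : ℤ) * m)) * P k m

/-- Numerator of the telescoping certificate. -/
def Nm (x B t : RatFunc ℚ) : RatFunc ℚ :=
  (B^6*x - B^7 - B^4*x^4 + B^5*x^3) + (B^2*x^5 - B^3*x^4 - B^4*x^2 + B^7)*t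
  + (B^3*x^4 + B^4*x^2 - B^5*x^3 - B^6*x)*t^2 + (B^4*x^4 - B^2*x^5)*t^3

/-- Telescoping certificate rational function. -/
def Rm (x B t : RatFunc ℚ) : RatFunc ℚ := Nm x B t / (x*B^4*(B-1)*(B-x))

/-- Telescoping certificate sequence. -/
def G (k : ℕ) (m : ℤ) : RatFunc ℚ := Rm q (q ^ m) (q ^ (k : ℤ)) * a k m

lemma P_succ (k : ℕ) (m : ℤ) : P (k + 1) m = P k m * (1 - q ^ ((k : ℤ) + 1 - m)) := by
  rw [P, Finset.prod_range_succ, ← P]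
  norm_num

lemma P_shift (k : ℕ) (m : ℤ) :
    P k (m - 1) * (1 - q ^ (-m)) = P k m * (1 - q ^ ((k : ℤ) + 1 - m)) := by
  induction k with
  | zero =>
      simp only [P, zero_add, Finset.prod_range_one, Nat.cast_zero]
      rw [show (0 : ℤ) - (m - 1) = 1 - m by ring, show (0 : ℤ) - m = -m by ring]
      ring
  | succ k ih =>
      rw [P_succ, P_succ, show ((k + 1 : ℕ) : ℤ) + 1 - m = (k : ℤ) + 2 - m by push_cast; ring,
        show (k : ℤ) + 1 - (m - 1) = (k : ℤ) + 2 - m by ring]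
      linear_combination (1 - q ^ ((k : ℤ) + 2 - m)) * ih

lemma P_shift' (k : ℕ) (m : ℤ) :
    P k (m - 1) * (q ^ m - 1) = P k m * (q ^ m - q ^ (1:ℕ) * q ^ (k : ℤ)) := by
  have h := P_shift k m
  have rel1 : q ^ (-m) * q ^ m = 1 := by
    rw [← zpow_add₀ q_ne]; norm_num
  have rel2 : q ^ ((k : ℤ) + 1 - m) * q ^ m = q ^ (1:ℕ) * q ^ (k : ℤ) := by
    simp only [← zpow_natCast q, ← zpow_add₀ q_ne]
    congr 1
    push_cast
    ring
  linear_combination q ^ m * h + P k (m-1) * rel1 - P k m * rel2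

lemma P_shift2 (k : ℕ) (m : ℤ) :
    P k (m - 2) * (q ^ m - q ^ (1:ℕ)) = P k (m-1) * (q ^ m - q ^ (2:ℕ) * q ^ (k : ℤ)) := by
  have h := P_shift' k (m-1)
  rw [show m - 1 - 1 = m - 2 by ring] at h
  have rel3 : q ^ (m-1) * q ^ (1:ℕ) = q ^ m := by
    simp only [← zpow_natCast q, ← zpow_add₀ q_ne]
    congr 1
    push_cast
    ring
  linear_combination q ^ (1:ℕ) * h + (P k (m-1) - P k (m-2)) * rel3

lemma P_zero {k : ℕ} {m : ℤ} (h0 : 0 ≤ m) (hk : m ≤ (k : ℤ)) : P k m = 0 := by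
  apply Finset.prod_eq_zero (i := m.toNat)
  · simp only [Finset.mem_range]
    omega
  · rw [Int.toNat_of_nonneg h0, sub_self, zpow_zero, sub_self]

lemma a_zero {k : ℕ} {m : ℤ} (h0 : 0 ≤ m) (hk : m ≤ (k : ℤ)) : a k m = 0 := by
  rw [a, P_zero h0 hk, mul_zero]

lemma G_zero_left (m : ℤ) : G 0 m = 0 := by
  have hN : Nm q (q ^ m) (q ^ ((0:ℕ) : ℤ)) = 0 := by
    rw [Nm, Nat.cast_zero, zpow_zero]
    ring
  rw [G, Rm, hN, zero_div, zero_mul]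

lemma G_zero_right {k : ℕ} {m : ℤ} (h0 : 0 ≤ m) (hk : m ≤ (k : ℤ)) : G k m = 0 := by
  rw [G, a_zero h0 hk, mul_zero]

set_option maxHeartbeats 1000000 in
/-- The master abstract identity behind the per-term telescoping. -/
lemma master (x B t w Pk : RatFunc ℚ) (hx : x ≠ 0) (hB : B ≠ 0) (hw : w ≠ 0)
    (h1 : B - 1 ≠ 0) (h2 : B - x ≠ 0) :
    (B*B - x^3) * Pk / (x*B*w)
      - (B^5 + x^5 - x*B^3 - x*x*B*B) * (t*Pk*(B - x*t)) / (x*B^4*(B-1)*w)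
      + (x^5 - x^4*B*B) * (t*t*Pk*(B - x*t)*(B - x*x*t)) / (B^4*(B-1)*(B-x)*w)
    = Nm x B (x*t) * (Pk*(B - x*t)) / (x*B^4*(B-1)*(B-x)*w*B^2)
      - Nm x B t * Pk / (x*B^4*(B-1)*(B-x)*w) := by
  have hd1 : x*B*w ≠ 0 := mul_ne_zero (mul_ne_zero hx hB) hw
  have hd2 : x*B^4*(B-1)*w ≠ 0 :=
    mul_ne_zero (mul_ne_zero (mul_ne_zero hx (pow_ne_zero _ hB)) h1) hw
  have hd3 : B^4*(B-1)*(B-x)*w ≠ 0 :=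
    mul_ne_zero (mul_ne_zero (mul_ne_zero (pow_ne_zero _ hB) h1) h2) hw
  have hr1 : x*B^4*(B-1)*(B-x)*w*B^2 ≠ 0 :=
    mul_ne_zero (mul_ne_zero (mul_ne_zero (mul_ne_zero (mul_ne_zero hx
      (pow_ne_zero _ hB)) h1) h2) hw) (pow_ne_zero _ hB)
  have hr2 : x*B^4*(B-1)*(B-x)*w ≠ 0 :=
    mul_ne_zero (mul_ne_zero (mul_ne_zero (mul_ne_zero hx (pow_ne_zero _ hB)) h1) h2) hw
  rw [div_sub_div _ _ hd1 hd2, div_add_div _ _ (mul_ne_zero hd1 hd2) hd3,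
    div_sub_div _ _ hr1 hr2, div_eq_div_iff (mul_ne_zero (mul_ne_zero hd1 hd2) hd3)
      (mul_ne_zero hr1 hr2)]
  simp only [Nm]
  ring

set_option maxHeartbeats 1600000 in
/-- Per-term telescoping identity. -/
lemma key (m : ℤ) (k : ℕ) (hm1 : q ^ m ≠ 1) (hmq : q ^ m ≠ q) :
    (q^(m-1) - q^(2-m)) * a k m
      - (q^(m-1) + q^(4-4*m) - q^(-m) - q^(1-2*m)) * a k (m-1)
      + (q^(5-4*m) - q^(4-2*m)) * a k (m-2)
    = G (k+1) m - G k m := by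
  have hA : q ^ m ≠ 0 := zpow_ne_zero _ q_ne
  have hW : q ^ ((k:ℤ)*m) ≠ 0 := zpow_ne_zero _ q_ne
  have hA1 : q ^ m - 1 ≠ 0 := sub_ne_zero.mpr hm1
  have hAq : q ^ m - q ≠ 0 := sub_ne_zero.mpr hmq
  -- bridging equality for the first summand
  have b0 : (q^(m-1) - q^(2-m)) * a k m
      = (q^m*q^m - q^(3:ℕ)) * P k m / (q^(1:ℕ)*q^m*q^((k:ℤ)*m)) := by
    rw [a, eq_div_iff (mul_ne_zero (mul_ne_zero (pow_ne_zero _ q_ne) hA) hW)]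
    have r1 : q^(m-1) * q^(-((k:ℤ)*m)) * (q^(1:ℕ)*q^m*q^((k:ℤ)*m)) = q^m*q^m := by
      simp only [← zpow_natCast q, ← zpow_add₀ q_ne]
      congr 1; push_cast; ring
    have r2 : q^(2-m) * q^(-((k:ℤ)*m)) * (q^(1:ℕ)*q^m*q^((k:ℤ)*m)) = q^(3:ℕ) := by
      simp only [← zpow_natCast q, ← zpow_add₀ q_ne]
      congr 1; push_cast; ring
    linear_combination P k m * r1 - P k m * r2
  -- bridging equality for the second summand
  have b1 : (q^(m-1) + q^(4-4*m) - q^(-m) - q^(1-2*m)) * a k (m-1)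
      = ((q^m)^5 + q^(5:ℕ) - q^(1:ℕ)*(q^m)^3 - q^(2:ℕ)*(q^m)^2)
          * (q^(k:ℤ) * P k m * (q^m - q^(1:ℕ)*q^(k:ℤ)))
          / (q^(1:ℕ)*(q^m)^4*(q^m - 1)*q^((k:ℤ)*m)) := by
    rw [a, eq_div_iff (mul_ne_zero (mul_ne_zero (mul_ne_zero (pow_ne_zero _ q_ne)
      (pow_ne_zero _ hA)) hA1) hW)]
    have r3 : q^(m-1) * q^(-((k:ℤ)*(m-1))) * (q^(1:ℕ)*(q^m)^4*q^((k:ℤ)*m))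
        = (q^m)^5 * q^(k:ℤ) := by
      simp only [← zpow_natCast q, ← zpow_natCast (q^m), ← zpow_mul, ← zpow_add₀ q_ne]
      congr 1; push_cast; ring
    have r4 : q^(4-4*m) * q^(-((k:ℤ)*(m-1))) * (q^(1:ℕ)*(q^m)^4*q^((k:ℤ)*m))
        = q^(5:ℕ) * q^(k:ℤ) := by
      simp only [← zpow_natCast q, ← zpow_natCast (q^m), ← zpow_mul, ← zpow_add₀ q_ne]
      congr 1; push_cast; ring
    have r5 : q^(-m) * q^(-((k:ℤ)*(m-1))) * (q^(1:ℕ)*(q^m)^4*q^((k:ℤ)*m))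
        = q^(1:ℕ) * (q^m)^3 * q^(k:ℤ) := by
      simp only [← zpow_natCast q, ← zpow_natCast (q^m), ← zpow_mul, ← zpow_add₀ q_ne]
      congr 1; push_cast; ring
    have r6 : q^(1-2*m) * q^(-((k:ℤ)*(m-1))) * (q^(1:ℕ)*(q^m)^4*q^((k:ℤ)*m))
        = q^(2:ℕ) * (q^m)^2 * q^(k:ℤ) := by
      simp only [← zpow_natCast q, ← zpow_natCast (q^m), ← zpow_mul, ← zpow_add₀ q_ne]
      congr 1; push_cast; ring
    linear_combination
      ((q^(m-1) + q^(4-4*m) - q^(-m) - q^(1-2*m)) * q^(-((k:ℤ)*(m-1)))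
        * (q^(1:ℕ)*(q^m)^4*q^((k:ℤ)*m))) * P_shift' k m
      + (P k m * (q^m - q^(1:ℕ)*q^(k:ℤ))) * (r3 + r4 - r5 - r6)
  -- bridging equality for the third summand
  have b2 : (q^(5-4*m) - q^(4-2*m)) * a k (m-2)
      = (q^(5:ℕ) - q^(4:ℕ)*q^m*q^m)
          * (q^(k:ℤ)*q^(k:ℤ) * P k m * (q^m - q^(1:ℕ)*q^(k:ℤ)) * (q^m - q^(2:ℕ)*q^(k:ℤ)))
          / ((q^m)^4*(q^m - 1)*(q^m - q^(1:ℕ))*q^((k:ℤ)*m)) := by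
    have hAq1 : q^m - q^(1:ℕ) ≠ 0 := by
      rw [pow_one]; exact hAq
    rw [a, eq_div_iff (mul_ne_zero (mul_ne_zero (mul_ne_zero (pow_ne_zero _ hA) hA1)
      hAq1) hW)]
    have r7 : q^(5-4*m) * q^(-((k:ℤ)*(m-2))) * ((q^m)^4*q^((k:ℤ)*m))
        = q^(5:ℕ) * (q^(k:ℤ)*q^(k:ℤ)) := by
      simp only [← zpow_natCast q, ← zpow_natCast (q^m), ← zpow_mul, ← zpow_add₀ q_ne]
      congr 1; push_cast; ring
    have r8 : q^(4-2*m) * q^(-((k:ℤ)*(m-2))) * ((q^m)^4*q^((k:ℤ)*m))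
        = q^(4:ℕ)*q^m*q^m * (q^(k:ℤ)*q^(k:ℤ)) := by
      simp only [← zpow_natCast q, ← zpow_natCast (q^m), ← zpow_mul, ← zpow_add₀ q_ne]
      congr 1; push_cast; ring
    linear_combination
      ((q^(5-4*m) - q^(4-2*m)) * q^(-((k:ℤ)*(m-2))) * ((q^m)^4*q^((k:ℤ)*m)) * (q^m - 1))
          * P_shift2 k m
      + ((q^(5-4*m) - q^(4-2*m)) * q^(-((k:ℤ)*(m-2))) * ((q^m)^4*q^((k:ℤ)*m))
          * (q^m - q^(2:ℕ)*q^(k:ℤ))) * P_shift' k m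
      + (P k m * (q^m - q^(1:ℕ)*q^(k:ℤ)) * (q^m - q^(2:ℕ)*q^(k:ℤ))) * (r7 - r8)
  -- bridging equality for G k
  have b3 : G k m = Nm q (q^m) (q^(k:ℤ)) * P k m
      / (q*(q^m)^4*(q^m - 1)*(q^m - q)*q^((k:ℤ)*m)) := by
    rw [G, Rm, a, zpow_neg]
    field_simp
  -- bridging equality for G (k+1)
  have b4 : G (k+1) m = Nm q (q^m) (q*q^(k:ℤ)) * (P k m * (q^m - q^(1:ℕ)*q^(k:ℤ)))
      / (q*(q^m)^4*(q^m - 1)*(q^m - q)*q^((k:ℤ)*m)*(q^m)^2) := by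
    have hT1 : q ^ (((k+1:ℕ)) : ℤ) = q * q^(k:ℤ) := by
      push_cast
      rw [zpow_add₀ q_ne, zpow_one, mul_comm]
    have hU1 : q ^ (-(((k+1:ℕ):ℤ)*m)) = (q^((k:ℤ)*m))⁻¹ * (q^m)⁻¹ := by
      rw [← zpow_neg, ← zpow_neg, ← zpow_add₀ q_ne]
      congr 1; push_cast; ring
    have hfac : (1:RatFunc ℚ) - q^((k:ℤ)+1-m) = (q^m - q^(1:ℕ)*q^(k:ℤ))/q^m := by
      rw [eq_div_iff hA]
      have rel : q^((k:ℤ)+1-m) * q^m = q^(1:ℕ) * q^(k:ℤ) := by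
        simp only [← zpow_natCast q, ← zpow_add₀ q_ne]
        congr 1; push_cast; ring
      linear_combination -rel
    rw [G, Rm, a, P_succ, hT1, hU1, hfac]
    field_simp
  rw [b0, b1, b2, b3, b4]
  linear_combination master q (q^m) (q^(k:ℤ)) (q^((k:ℤ)*m)) (P k m) q_ne hA hW hA1 hAq

lemma J_eq (n : ℕ) : J n = v ^ (1 - (n : ℤ)) / (1 - q ^ (-1 : ℤ)) *
    ∑ k ∈ Finset.range n, a k (n : ℤ) := by
  by_cases h : n = 0
  · subst h
    simp [J]
  · rw [J, if_neg h]
    rfl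

lemma one_sub_qinv_ne : (1 : RatFunc ℚ) - q ^ (-1 : ℤ) ≠ 0 :=
  one_sub_q_zpow_ne (by norm_num)

lemma J_one : J 1 = 1 := by
  rw [J_eq]
  norm_num [a, P, Finset.sum_range_one, Finset.prod_range_one]
  have h : (1:RatFunc ℚ) - q⁻¹ ≠ 0 := by
    have := one_sub_qinv_ne
    rwa [zpow_neg, zpow_one] at this
  exact inv_mul_cancel₀ h

set_option maxHeartbeats 1000000 in
theorem trefoil_recursion :
    J 1 = 1 ∧
    ∀ n : ℕ, 2 ≤ n →
      J n = ((q ^ ((n : ℤ) - 1) + q ^ (4 - 4 * (n : ℤ)) - q ^ (-(n : ℤ))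
              - q ^ (1 - 2 * (n : ℤ))) /
            (v * (q ^ ((n : ℤ) - 1) - q ^ (2 - (n : ℤ))))) * J (n - 1)
          + ((q ^ (4 - 4 * (n : ℤ)) - q ^ (3 - 2 * (n : ℤ))) /
            (q ^ (2 - (n : ℤ)) - q ^ ((n : ℤ) - 1))) * J (n - 2) := by
  refine ⟨J_one, ?_⟩
  intro n hn
  obtain ⟨p, rfl⟩ : ∃ p, n = p + 2 := ⟨n - 2, by omega⟩
  set m : ℤ := ((p + 2 : ℕ) : ℤ) with hm
  have hm0 : m ≠ 0 := by
    rw [hm]; intro h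
    have : (p + 2 : ℕ) = 0 := by exact_mod_cast h
    omega
  have hm1 : m ≠ 1 := by
    rw [hm]; intro h
    have : (p + 2 : ℕ) = 1 := by exact_mod_cast h
    omega
  have hqm1 : q ^ m ≠ 1 := q_zpow_ne_one hm0
  have hqmq : q ^ m ≠ q := by
    have := q_zpow_ne hm1
    rwa [zpow_one] at this
  -- telescoping sum
  have hsum : ∑ k ∈ Finset.range (p + 2),
      ((q^(m-1) - q^(2-m)) * a k m
        - (q^(m-1) + q^(4-4*m) - q^(-m) - q^(1-2*m)) * a k (m-1)
        + (q^(5-4*m) - q^(4-2*m)) * a k (m-2)) = 0 := by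
    rw [Finset.sum_congr rfl (fun k _ => key m k hqm1 hqmq),
      Finset.sum_range_sub (f := fun k => G k m)]
    rw [G_zero_left, G_zero_right (by rw [hm]; positivity) (by rw [hm])]
    ring
  -- split the sum
  rw [Finset.sum_add_distrib, Finset.sum_sub_distrib, ← Finset.mul_sum, ← Finset.mul_sum,
    ← Finset.mul_sum] at hsum
  -- truncate the shifted sums
  have htr1 : ∑ k ∈ Finset.range (p + 2), a k (m-1) = ∑ k ∈ Finset.range (p + 1), a k (m-1) := by
    rw [Finset.sum_range_succ, a_zero (by rw [hm]; push_cast; omega)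
      (by rw [hm]; push_cast; omega), add_zero]
  have htr2 : ∑ k ∈ Finset.range (p + 2), a k (m-2) = ∑ k ∈ Finset.range p, a k (m-2) := by
    rw [Finset.sum_range_succ, Finset.sum_range_succ,
      a_zero (by rw [hm]; push_cast; omega) (by rw [hm]; push_cast; omega),
      a_zero (by rw [hm]; push_cast; omega) (by rw [hm]; push_cast; omega), add_zero, add_zero]
  rw [htr1, htr2] at hsum
  -- notation for the three sums
  set Sa := ∑ k ∈ Finset.range (p + 2), a k m with hSa
  set Sb := ∑ k ∈ Finset.range (p + 1), a k (m-1) with hSb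
  set Sc := ∑ k ∈ Finset.range p, a k (m-2) with hSc
  have hC0 : q^(m-1) - q^(2-m) ≠ 0 := sub_ne_zero.mpr (q_zpow_ne (by omega))
  have hC0' : q^(2-m) - q^(m-1) ≠ 0 := sub_ne_zero.mpr (q_zpow_ne (by omega))
  have hvvq : v * v = q := by rw [q]; ring
  have rq5 : q^(5-4*m) = q^(4-4*m) * (v*v) := by
    rw [hvvq, show 5-4*m = (4-4*m)+1 by ring, zpow_add_one₀ q_ne]
  have rq4 : q^(4-2*m) = q^(3-2*m) * (v*v) := by
    rw [hvvq, show 4-2*m = (3-2*m)+1 by ring, zpow_add_one₀ q_ne]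
  rw [rq5, rq4] at hsum
  have hSolve : Sa = ((q^(m-1) + q^(4-4*m) - q^(-m) - q^(1-2*m)) * Sb
      - (q^(4-4*m)*(v*v) - q^(3-2*m)*(v*v)) * Sc) / (q^(m-1) - q^(2-m)) := by
    rw [eq_div_iff hC0]
    linear_combination hsum
  -- rewrite the J's
  have hJ2 : J (p + 2) = v ^ (1 - m) / (1 - q ^ (-1:ℤ)) * Sa := J_eq (p+2)
  have hc1 : ((p + 1 : ℕ) : ℤ) = m - 1 := by rw [hm]; push_cast; ring
  have hc2 : ((p : ℕ) : ℤ) = m - 2 := by rw [hm]; push_cast; ring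
  have hJ1 : J (p + 1) = v ^ (1 - (m-1)) / (1 - q ^ (-1:ℤ)) * Sb := by
    have := J_eq (p+1)
    rwa [hc1] at this
  have hJ0 : J p = v ^ (1 - (m-2)) / (1 - q ^ (-1:ℤ)) * Sc := by
    have := J_eq p
    rwa [hc2] at this
  have rv1 : v ^ (1 - (m-1)) = v ^ (1-m) * v := by
    rw [show 1-(m-1) = (1-m)+1 by ring, zpow_add_one₀ v_ne]
  have rv2 : v ^ (1 - (m-2)) = v ^ (1-m) * v * v := by
    rw [show 1-(m-2) = ((1-m)+1)+1 by ring, zpow_add_one₀ v_ne, zpow_add_one₀ v_ne]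
  have hred1 : p + 2 - 1 = p + 1 := by omega
  have hred2 : p + 2 - 2 = p := by omega
  rw [hred1, hred2, hJ2, hJ1, hJ0, hSolve, rv1, rv2]
  simp only [div_mul_eq_mul_div, ← mul_div_assoc, div_div]
  have hE : (1:RatFunc ℚ) - q ^ (-1:ℤ) ≠ 0 := one_sub_qinv_ne
  have hd0 : (1 - q ^ (-1:ℤ)) * (q^(m-1) - q^(2-m)) ≠ 0 := mul_ne_zero hE hC0
  have hd1 : v * (q^(m-1) - q^(2-m)) * (1 - q ^ (-1:ℤ)) ≠ 0 :=
    mul_ne_zero (mul_ne_zero v_ne hC0) hE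
  have hd2 : (q^(2-m) - q^(m-1)) * (1 - q ^ (-1:ℤ)) ≠ 0 := mul_ne_zero hC0' hE
  rw [div_add_div _ _ hd1 hd2, div_eq_div_iff hd0 (mul_ne_zero hd1 hd2)]
  ring


end Stmt0
end
end

section
/- Let c(p,·) : ℕ → ℚ(q) be defined by c(p,n) = (-1)^{n+1} q^{n(n+3)/2} Σ_{k=0}^{n} (-1)^k q^{k(k+1)p + k(k-1)/2} (q^{2k+1} − 1) (q;q)_n / ((q;q)_{n+k+1} (q;q)_{n-k}). Then c(-1, n) = 1 for all n ∈ ℕ; equivalently, c(-1, n) = c(-1, n-1) for all n ≥ 1 and c(-1,0) = 1. -/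
noncomputable section

namespace StmtC

/-- The variable `q` of the field ℚ(q). -/
def q : RatFunc ℚ := RatFunc.X

/-- The q-Pochhammer symbol `(q;q)_m = ∏_{i=1}^{m} (1 - qⁱ)`. -/
def qq (m : ℕ) : RatFunc ℚ := ∏ i ∈ Finset.range m, (1 - q ^ (i + 1))

/-- Masbaum's formula for the cyclotomic function of the p-th twist knot. -/
def c (p : ℤ) (n : ℕ) : RatFunc ℚ :=
  (-1) ^ (n + 1) * q ^ ((n : ℤ) * ((n : ℤ) + 3) / 2) *
    ∑ k ∈ Finset.range (n + 1),
      (-1) ^ k * q ^ ((k : ℤ) * ((k : ℤ) + 1) * p + (k : ℤ) * ((k : ℤ) - 1) / 2) *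
        (q ^ (2 * k + 1) - 1) * qq n / (qq (n + k + 1) * qq (n - k))

end StmtC

namespace StmtC

lemma q_ne_zero : q ≠ 0 := RatFunc.X_ne_zero

lemma one_sub_q_pow_ne_zero (m : ℕ) : (1 : RatFunc ℚ) - q ^ (m + 1) ≠ 0 := by
  have h0 : (Polynomial.X ^ (m + 1) - Polynomial.C (1:ℚ)) ≠ 0 :=
    Polynomial.X_pow_sub_C_ne_zero (Nat.succ_pos m) 1
  have h1 : (1 : Polynomial ℚ) - Polynomial.X ^ (m + 1) ≠ 0 := by
    intro h; apply h0; rw [Polynomial.C_1]; linear_combination -h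
  have h2 : (1 : RatFunc ℚ) - q ^ (m + 1) =
      algebraMap (Polynomial ℚ) (RatFunc ℚ) (1 - Polynomial.X ^ (m + 1)) := by
    simp [q, RatFunc.algebraMap_X, map_sub, map_pow]
  rw [h2]
  exact RatFunc.algebraMap_ne_zero h1

lemma qq_ne_zero (m : ℕ) : qq m ≠ 0 := by
  rw [qq]
  exact Finset.prod_ne_zero_iff.2 fun i _ => one_sub_q_pow_ne_zero i

lemma qq_succ (m : ℕ) : qq (m + 1) = qq m * (1 - q ^ (m + 1)) :=
  Finset.prod_range_succ _ m

def E (k : ℕ) : ℤ := (k : ℤ) * ((k : ℤ) + 3) / 2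

lemma E_half (k : ℕ) : 2 * E k = (k : ℤ) * ((k : ℤ) + 3) := by
  obtain ⟨r, hr⟩ := Int.even_mul_succ_self (k : ℤ)
  have h : (k : ℤ) * ((k : ℤ) + 3) = 2 * (r + k) := by linear_combination hr
  rw [E, h, Int.mul_ediv_cancel_left _ (by norm_num)]

lemma E_succ (k : ℕ) : E (k + 1) = E k + ((k : ℤ) + 2) := by
  have h1 := E_half k
  have h2 := E_half (k + 1)
  push_cast at h2
  have h3 : 2 * E (k + 1) = 2 * (E k + ((k : ℤ) + 2)) := by linear_combination h2 - h1
  omega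

lemma exp_eq (k : ℕ) :
    (k : ℤ) * ((k : ℤ) + 1) * (-1) + (k : ℤ) * ((k : ℤ) - 1) / 2 = -(E k) := by
  have h := E_half k
  have h2 : (k : ℤ) * ((k : ℤ) - 1) = 2 * (E k - 2 * k) := by linear_combination -h
  rw [h2, Int.mul_ediv_cancel_left _ (by norm_num)]
  linear_combination h

lemma zpow_E_succ (k : ℕ) : q ^ E (k + 1) = q ^ E k * q ^ (k + 2) := by
  have h : q ^ ((k : ℤ) + 2) = q ^ (k + 2) := by
    rw [show ((k : ℤ) + 2) = ((k + 2 : ℕ) : ℤ) by push_cast; ring, zpow_natCast]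
  rw [E_succ, zpow_add₀ q_ne_zero, h]

def A (n k : ℕ) : RatFunc ℚ :=
  (-1) ^ (n + 1) * q ^ E n *
    ((-1) ^ k * q ^ ((k : ℤ) * ((k : ℤ) + 1) * (-1) + (k : ℤ) * ((k : ℤ) - 1) / 2) *
        (q ^ (2 * k + 1) - 1) * qq n / (qq (n + k + 1) * qq (n - k)))

def Bf (n m : ℕ) : RatFunc ℚ :=
  (-1) ^ (n + m) *
    (q ^ E n * (q ^ E m)⁻¹ * q ^ m * q * (1 - q ^ m) * qq n / (qq (n + m + 1) * qq (n + 1 - m)))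

lemma c_sum (n : ℕ) : c (-1) n = ∑ k ∈ Finset.range (n + 1), A n k := by
  rw [c, Finset.mul_sum]
  rfl

set_option maxHeartbeats 2000000 in
lemma key (n m : ℕ) (hm : m ≤ n) :
    Bf n (m + 1) - Bf n m = A (n + 1) m - A n m := by
  obtain ⟨j, rfl⟩ : ∃ j, n = m + j := ⟨n - m, by omega⟩
  simp only [A, Bf, exp_eq m, zpow_neg]
  rw [zpow_E_succ (m + j), zpow_E_succ m]
  rw [show m + j + 1 - m = j + 1 by omega, show m + j + 1 - (m + 1) = j by omega,
    show m + j + 1 + m + 1 = (m + j + m + 1) + 1 by omega,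
    show m + j + (m + 1) + 1 = (m + j + m + 1) + 1 by omega,
    show m + j - m = j by omega]
  rw [qq_succ (m + j + m + 1), qq_succ j, qq_succ (m + j)]
  have h1 := qq_ne_zero (m + j)
  have h2 := qq_ne_zero (m + j + m + 1)
  have h3 := qq_ne_zero j
  have h4 := one_sub_q_pow_ne_zero (m + j + m + 1)
  have h5 := one_sub_q_pow_ne_zero j
  have h6 := one_sub_q_pow_ne_zero (m + j)
  have h7 : q ^ E m ≠ 0 := zpow_ne_zero _ q_ne_zero
  have h8 : q ^ E (m + j) ≠ 0 := zpow_ne_zero _ q_ne_zero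
  obtain ⟨d1, hd1⟩ : ∃ d : RatFunc ℚ, 1 - q ^ (m + j + m + 1 + 1) = d := ⟨_, rfl⟩
  obtain ⟨d2, hd2⟩ : ∃ d : RatFunc ℚ, 1 - q ^ (j + 1) = d := ⟨_, rfl⟩
  obtain ⟨d3, hd3⟩ : ∃ d : RatFunc ℚ, 1 - q ^ (m + j + 1) = d := ⟨_, rfl⟩
  rw [hd1, hd2, hd3]
  rw [hd1] at h4
  rw [hd2] at h5
  rw [hd3] at h6
  field_simp [q_ne_zero, h1, h2, h3, h4, h5, h6, h7, h8]
  rw [← hd1, ← hd2, ← hd3]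
  ring

set_option maxHeartbeats 2000000 in
lemma boundary (n : ℕ) : A (n + 1) (n + 1) = - Bf n (n + 1) := by
  simp only [A, Bf, exp_eq (n + 1), zpow_neg]
  rw [zpow_E_succ n]
  rw [show n + 1 - (n + 1) = 0 by omega, show n + 1 + (n + 1) + 1 = (2 * n + 2) + 1 by omega,
    show n + (n + 1) + 1 = 2 * n + 2 by omega]
  rw [qq_succ (2 * n + 2), qq_succ n]
  have h1 := qq_ne_zero n
  have h2 := qq_ne_zero (2 * n + 2)
  have h4 := one_sub_q_pow_ne_zero (2 * n + 2)
  have h6 := one_sub_q_pow_ne_zero n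
  have h7 : q ^ E (n + 1) ≠ 0 := zpow_ne_zero _ q_ne_zero
  have h8 : q ^ E n ≠ 0 := zpow_ne_zero _ q_ne_zero
  have h9 : qq 0 = 1 := Finset.prod_range_zero _
  rw [h9]
  obtain ⟨d1, hd1⟩ : ∃ d : RatFunc ℚ, 1 - q ^ (2 * n + 2 + 1) = d := ⟨_, rfl⟩
  obtain ⟨d3, hd3⟩ : ∃ d : RatFunc ℚ, 1 - q ^ (n + 1) = d := ⟨_, rfl⟩
  rw [hd1, hd3]
  rw [hd1] at h4
  rw [hd3] at h6
  field_simp [q_ne_zero, h1, h2, h4, h6, h7, h8]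
  rw [← hd1]
  have hs : ((-1 : RatFunc ℚ)) ^ (n * 2) = 1 := by
    rw [mul_comm n 2, pow_mul]; norm_num
  ring_nf

lemma Bf_zero (n : ℕ) : Bf n 0 = 0 := by
  simp [Bf]

lemma c_step (n : ℕ) : c (-1) (n + 1) = c (-1) n := by
  rw [c_sum (n + 1), c_sum n, Finset.sum_range_succ]
  have htel : ∑ k ∈ Finset.range (n + 1), (A (n + 1) k - A n k)
      = Bf n (n + 1) - Bf n 0 := by
    rw [← Finset.sum_range_sub (fun k => Bf n k)]
    exact Finset.sum_congr rfl fun k hk =>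
      (key n k (by simpa using Nat.lt_succ_iff.mp (Finset.mem_range.mp hk))).symm
  have h2 : ∑ k ∈ Finset.range (n + 1), A (n + 1) k
      = ∑ k ∈ Finset.range (n + 1), A n k + (Bf n (n + 1) - Bf n 0) := by
    rw [← htel, ← Finset.sum_add_distrib]
    exact Finset.sum_congr rfl fun k _ => by ring
  rw [h2, Bf_zero, boundary]
  ring

lemma c_zero : c (-1) 0 = 1 := by
  have h : (1 : RatFunc ℚ) - q ≠ 0 := by simpa using one_sub_q_pow_ne_zero 0
  simp [c, qq, Finset.sum_range_one, Finset.prod_range_one, Finset.prod_range_zero]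
  field_simp
  ring

theorem cyclotomic_figure8_constant :
    (∀ n : ℕ, c (-1) n = 1) ∧
    ((∀ n : ℕ, 1 ≤ n → c (-1) n = c (-1) (n - 1)) ∧ c (-1) 0 = 1) := by
  have hall : ∀ n : ℕ, c (-1) n = 1 := by
    intro n
    induction n with
    | zero => exact c_zero
    | succ n ih => rw [c_step n, ih]
  exact ⟨hall, fun n _ => by rw [hall n, hall (n - 1)], hall 0⟩


end StmtC
end
end

section
/- For every integer n ≥ 1 the following identity holds in the ring ℚ(v)[z, z^{-1}] of Laurent polynomials over ℚ(v): ∏_{i=1}^{n-1} (z + z^{-1} − v^{2i-1} − v^{1-2i}) = Σ_{k=1}^{n} (−1)^{n-k} ({2k}/{2n}) · [2n choose n−k] · (z^k − z^{-k})/(z − z^{-1}), where (z^k − z^{-k})/(z − z^{-1}) = Σ_{j=0}^{k-1} z^{k-1-2j} is a Laurent polynomial. -/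
/-
Character form of the Habiro–Masbaum formula: in ℚ(v)[z, z⁻¹],
∏_{i=1}^{n-1} (z + z⁻¹ − v^{2i-1} − v^{1-2i})
  = Σ_{k=1}^{n} (−1)^{n-k} ({2k}/{2n}) [2n choose n−k] (z^k − z^{-k})/(z − z^{-1}).
-/

noncomputable section

namespace Stmt8

/-- The variable `v` of the field ℚ(v). -/
def v : RatFunc ℚ := RatFunc.X

/-- `{m} = v^m - v^{-m}`. -/
def brace (m : ℤ) : RatFunc ℚ := v ^ m - v ^ (-m)

/-- `{m}_k = ∏_{i=1}^{k} {m-i+1}`. -/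
def braceP (m : ℤ) (k : ℕ) : RatFunc ℚ := ∏ i ∈ Finset.range k, brace (m - i)

/-- The balanced q-binomial `[m choose k] = {m}_k / {k}_k`. -/
def qbinom (m : ℤ) (k : ℕ) : RatFunc ℚ := braceP m k / braceP k k

open LaurentPolynomial

lemma hv : (v : RatFunc ℚ) ≠ 0 := RatFunc.X_ne_zero

lemma v_pow_nat_ne_one {k : ℕ} (hk : k ≠ 0) : (v : RatFunc ℚ) ^ k ≠ 1 := by
  intro h
  have h2 : algebraMap (Polynomial ℚ) (RatFunc ℚ) (Polynomial.X ^ k) =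
      algebraMap (Polynomial ℚ) (RatFunc ℚ) 1 := by
    simpa [v, RatFunc.algebraMap_X, map_pow] using h
  have h3 := RatFunc.algebraMap_injective ℚ h2
  have := congrArg Polynomial.natDegree h3
  simp [Polynomial.natDegree_X_pow] at this
  exact hk this

lemma v_zpow_ne_one {m : ℤ} (hm : m ≠ 0) : v ^ m ≠ 1 := by
  intro h
  rcases lt_trichotomy m 0 with h1 | h1 | h1
  · have h4 : v ^ (-m) = 1 := by rw [zpow_neg, h, inv_one]
    lift -m to ℕ using (by omega : (0:ℤ) ≤ -m) with k hk
    rw [zpow_natCast] at h4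
    exact v_pow_nat_ne_one (by omega) h4
  · exact hm h1
  · lift m to ℕ using h1.le with k hk
    rw [zpow_natCast] at h
    exact v_pow_nat_ne_one (by omega) h

lemma brace_ne_zero {m : ℤ} (hm : m ≠ 0) : brace m ≠ 0 := by
  intro h
  have h1 : v ^ m = v ^ (-m) := by rwa [brace, sub_eq_zero] at h
  have h2 : v ^ (2 * m) = 1 := by
    have := congrArg (· * v ^ m) h1
    simp only [← zpow_add₀ hv] at this
    simpa [two_mul] using this
  exact v_zpow_ne_one (by omega) h2

lemma brace_eq (m : ℤ) : brace m = v ^ m - (v ^ m)⁻¹ := by rw [brace, zpow_neg]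

lemma star_aux {F : Type*} [Field F] (x y w : F) (hx : x ≠ 0) (hy : y ≠ 0) (hw : w ≠ 0) :
    (x*x - (x*x)⁻¹) * (y*y - (y*y)⁻¹) * (x*x*w - (x*x*w)⁻¹) =
      (y*y*w⁻¹*w⁻¹ - (y*y*w⁻¹*w⁻¹)⁻¹) * (x*y*w - (x*y*w)⁻¹) * (x*y - (x*y)⁻¹)
      + (y*y*w*w - (y*y*w*w)⁻¹) * (x*y⁻¹ - (x*y⁻¹)⁻¹) * (x*y⁻¹*w - (x*y⁻¹*w)⁻¹)
      + (x*x*w⁻¹ + (x*x*w⁻¹)⁻¹) * (y*y - (y*y)⁻¹) * (x*y*w - (x*y*w)⁻¹) * (x*y⁻¹*w - (x*y⁻¹*w)⁻¹) := by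
  simp only [mul_inv, inv_inv]
  have hx1 : x * x⁻¹ = 1 := mul_inv_cancel₀ hx
  have hy1 : y * y⁻¹ = 1 := mul_inv_cancel₀ hy
  have hw1 : w * w⁻¹ = 1 := mul_inv_cancel₀ hw
  linear_combination (y⁻¹^2*w⁻¹ + y⁻¹^2*w + (-1)*y*y⁻¹^3*w*w⁻¹^2 + (-1)*y*y⁻¹^3*w^2*w⁻¹ + (-1)*y^2*w⁻¹ + (-1)*y^2*w + y^3*y⁻¹*w*w⁻¹^2 + y^3*y⁻¹*w^2*w⁻¹ + (-1)*x⁻¹^2*y⁻¹^4*w^2*w⁻¹ + x⁻¹^2*y^4*w^2*w⁻¹ + x*x⁻¹*y⁻¹^2*w⁻¹ + x*x⁻¹*y⁻¹^2*w + x*x⁻¹*y*y⁻¹^3*w⁻¹^3 + x*x⁻¹*y*y⁻¹^3*w^3 + (-1)*x*x⁻¹*y^2*w⁻¹ + (-1)*x*x⁻¹*y^2*w + (-1)*x*x⁻¹*y^3*y⁻¹*w⁻¹^3 + (-1)*x*x⁻¹*y^3*y⁻¹*w^3 + (-1)*x^2*y⁻¹^4*w*w⁻¹^2 + x^2*y^4*w*w⁻¹^2)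 * hx1 + ((-1)*y⁻¹^2*w*w⁻¹^2 + (-1)*y⁻¹^2*w^2*w⁻¹ + y^2*w*w⁻¹^2 + y^2*w^2*w⁻¹ + x⁻¹^4*y⁻¹^2*w*w⁻¹^2 + (-1)*x⁻¹^4*y^2*w*w⁻¹^2 + x^4*y⁻¹^2*w^2*w⁻¹ + (-1)*x^4*y^2*w^2*w⁻¹) * hy1 + ((-1)*y⁻¹^2*w⁻¹ + (-1)*y⁻¹^2*w + y^2*w⁻¹ + y^2*w + x⁻¹^4*y⁻¹^2*w⁻¹ + (-1)*x⁻¹^4*y^2*w⁻¹ + x^4*y⁻¹^2*w + (-1)*x^4*y^2*w) * hw1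

lemma star (a b : ℤ) :
    brace (2*a) * brace (2*b) * brace (2*a+1) =
      brace (2*b-2) * brace (a+b+1) * brace (a+b)
      + brace (2*b+2) * brace (a-b) * brace (a-b+1)
      + (v ^ (2*a-1) + v ^ (1-2*a)) * brace (2*b) * brace (a+b+1) * brace (a-b+1) := by
  have hx : (v : RatFunc ℚ) ^ a ≠ 0 := zpow_ne_zero _ hv
  have hy : (v : RatFunc ℚ) ^ b ≠ 0 := zpow_ne_zero _ hv
  simp only [brace_eq]
  simp only [sub_eq_add_neg, two_mul, neg_add,
    show ∀ m:ℤ, m + 2 = m+1+1 from fun m => by ring,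
    show ∀ m:ℤ, m + -2 = m + -1 + -1 from fun m => by ring]
  simp only [zpow_add₀ hv, zpow_neg, zpow_one]
  have key := star_aux ((v:RatFunc ℚ)^a) ((v:RatFunc ℚ)^b) v hx hy hv
  simp only [mul_inv, inv_inv] at key ⊢
  linear_combination key

lemma braceP_succ (M : ℤ) (k : ℕ) : braceP M (k+1) = braceP M k * brace (M - k) := by
  rw [braceP, Finset.prod_range_succ]; rfl

lemma braceP_succ' (M : ℤ) (k : ℕ) : braceP M (k+1) = brace M * braceP (M-1) k := by
  rw [braceP, Finset.prod_range_succ']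
  rw [mul_comm]
  congr 1
  · norm_num
  · rw [braceP]
    apply Finset.prod_congr rfl
    intro i _
    congr 1
    push_cast
    ring

lemma fact_succ (k : ℕ) : braceP (k+1 : ℕ) (k+1) = brace ((k:ℤ)+1) * braceP k k := by
  have h := braceP_succ' ((k:ℕ)+1 : ℕ) k
  push_cast at h ⊢
  rw [h]
  norm_num

lemma braceP_ne_zero {M : ℤ} {k : ℕ} (h : ∀ i : ℕ, i < k → M - i ≠ 0) : braceP M k ≠ 0 := by
  rw [braceP]
  apply Finset.prod_ne_zero_iff.mpr
  intro i hi
  exact brace_ne_zero (h i (Finset.mem_range.mp hi))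

lemma fact_ne_zero (k : ℕ) : braceP k k ≠ 0 := by
  apply braceP_ne_zero
  intro i hi
  omega

/-- the coefficient -/
def c (n k : ℕ) : RatFunc ℚ :=
  (-1) ^ (n - k) * (brace (2 * k) / brace (2 * n)) * qbinom (2 * n) (n - k)

lemma c_zero (n : ℕ) : c n 0 = 0 := by
  simp [c, brace]

lemma c_self {n : ℕ} (hn : 1 ≤ n) : c n n = 1 := by
  have h1 : brace (2 * (n:ℤ)) ≠ 0 := brace_ne_zero (by omega)
  simp [c, qbinom, braceP, div_self h1]

def aa (n : ℕ) : RatFunc ℚ := v ^ (2*(n:ℤ)-1) + v ^ (1-2*(n:ℤ))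

lemma caseIII {n : ℕ} (hn : 1 ≤ n) : c (n+1) (n+1) = c n n := by
  rw [c_self hn, c_self (by omega : 1 ≤ n+1)]

lemma braceP_one (M : ℤ) : braceP M 1 = brace M := by
  simp [braceP]

lemma small (a : ℤ) :
    brace (2*a) = brace (2*a-2) + (v ^ (2*a-1) + v ^ (1-2*a)) * brace 1 := by
  have hx : (v : RatFunc ℚ) ^ a ≠ 0 := zpow_ne_zero _ hv
  simp only [brace_eq]
  simp only [sub_eq_add_neg, two_mul, neg_add,
    show ∀ m:ℤ, m + 2 = m+1+1 from fun m => by ring,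
    show ∀ m:ℤ, m + -2 = m + -1 + -1 from fun m => by ring]
  simp only [zpow_add₀ hv, zpow_neg, zpow_one]
  have hx1 : (v:RatFunc ℚ)^a * ((v:RatFunc ℚ)^a)⁻¹ = 1 := mul_inv_cancel₀ hx
  have hw1 : (v:RatFunc ℚ) * (v:RatFunc ℚ)⁻¹ = 1 := mul_inv_cancel₀ hv
  simp only [mul_inv, inv_inv]
  linear_combination (((v:RatFunc ℚ)^a)⁻¹*((v:RatFunc ℚ)^a)⁻¹ - (v:RatFunc ℚ)^a*(v:RatFunc ℚ)^a) * hw1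

lemma caseII {n : ℕ} (hn : 1 ≤ n) : c (n+1) n = c n (n-1) - aa n * c n n := by
  have h1 : brace 1 ≠ 0 := brace_ne_zero one_ne_zero
  have h2n : brace (2*(n:ℤ)) ≠ 0 := brace_ne_zero (by omega)
  have h2n2 : brace (2*(n:ℤ)+2) ≠ 0 := brace_ne_zero (by omega)
  have E1 : c (n+1) n = -(brace (2*(n:ℤ)) / brace 1) := by
    rw [c, qbinom, show (n+1)-n = 1 by omega, braceP_one, braceP_one]
    rw [show (2*((n+1:ℕ):ℤ)) = 2*(n:ℤ)+2 by push_cast; ring]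
    rw [show (((1:ℕ)):ℤ) = (1:ℤ) by norm_num]
    field_simp
  have E2 : c n (n-1) = -(brace (2*(n:ℤ)-2) / brace 1) := by
    rw [c, qbinom, show n-(n-1) = 1 by omega, braceP_one, braceP_one]
    rw [show (2*(((n-1):ℕ):ℤ)) = 2*(n:ℤ)-2 by push_cast [hn]; ring]
    rw [show (((1:ℕ)):ℤ) = (1:ℤ) by norm_num]
    field_simp
  rw [E1, E2, c_self hn, mul_one, aa]
  field_simp
  linear_combination (-1 : RatFunc ℚ) * small (n:ℤ)

lemma caseI {n m : ℕ} (hm : 1 ≤ m) (hmn : m + 1 ≤ n) :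
    c (n+1) m = c n (m-1) + c n (m+1) - aa n * c n m := by
  obtain ⟨t, rfl⟩ : ∃ t, n = m + 1 + t := ⟨n - (m+1), by omega⟩
  set n := m + 1 + t with hndef
  have h2n : brace (2*(n:ℤ)) ≠ 0 := brace_ne_zero (by push_cast [hndef]; omega)
  have h2n2 : brace (2*(n:ℤ)+2) ≠ 0 := brace_ne_zero (by push_cast [hndef]; omega)
  have hnm : brace ((n:ℤ)-(m:ℤ)) ≠ 0 := brace_ne_zero (by push_cast [hndef]; omega)
  have hnm1 : brace ((n:ℤ)-(m:ℤ)+1) ≠ 0 := brace_ne_zero (by push_cast [hndef]; omega)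
  have hQ : braceP (2*(n:ℤ)) t ≠ 0 := braceP_ne_zero (by
    intro i hi; push_cast [hndef]; omega)
  have hR : braceP (t:ℕ) t ≠ 0 := fact_ne_zero t
  set K : RatFunc ℚ :=
    (-1)^t * braceP (2*(n:ℤ)) t /
      (brace (2*(n:ℤ)) * brace ((n:ℤ)-(m:ℤ)+1) * brace ((n:ℤ)-(m:ℤ)) * braceP (t:ℕ) t) with hK
  -- product expansions
  have B1 : braceP (2*(n:ℤ)+2) (t+2)
      = brace (2*(n:ℤ)+2) * (brace (2*(n:ℤ)+1) * braceP (2*(n:ℤ)) t) := by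
    rw [braceP_succ', show (2*(n:ℤ)+2-1) = 2*(n:ℤ)+1 by ring, braceP_succ',
      show (2*(n:ℤ)+1-1) = 2*(n:ℤ) by ring]
  have B2 : braceP (2*(n:ℤ)) (t+2)
      = braceP (2*(n:ℤ)) t * brace ((n:ℤ)+(m:ℤ)+1) * brace ((n:ℤ)+(m:ℤ)) := by
    rw [show t+2 = (t+1)+1 by ring, braceP_succ, braceP_succ]
    rw [show (2*(n:ℤ) - (t:ℕ)) = (n:ℤ)+(m:ℤ)+1 by push_cast [hndef]; ring]
    rw [show (2*(n:ℤ) - ((t+1:ℕ):ℤ)) = (n:ℤ)+(m:ℤ) by push_cast [hndef]; ring]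
  have B3 : braceP ((t+2:ℕ):ℤ) (t+2)
      = brace ((n:ℤ)-(m:ℤ)+1) * (brace ((n:ℤ)-(m:ℤ)) * braceP (t:ℕ) t) := by
    have f1 := fact_succ (t+1)
    have f2 := fact_succ t
    rw [show ((t+2:ℕ)) = ((t+1)+1:ℕ) by ring] at *
    rw [f1, f2]
    rw [show (((t+1:ℕ)):ℤ)+1 = (n:ℤ)-(m:ℤ)+1 by push_cast [hndef]; ring]
    rw [show ((t:ℕ):ℤ)+1 = (n:ℤ)-(m:ℤ) by push_cast [hndef]; ring]
  have B4 : braceP ((t+1:ℕ):ℤ) (t+1) = brace ((n:ℤ)-(m:ℤ)) * braceP (t:ℕ) t := by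
    have f2 := fact_succ t
    rw [f2, show ((t:ℕ):ℤ)+1 = (n:ℤ)-(m:ℤ) by push_cast [hndef]; ring]
  have B5 : braceP (2*(n:ℤ)) (t+1) = braceP (2*(n:ℤ)) t * brace ((n:ℤ)+(m:ℤ)+1) := by
    rw [braceP_succ, show (2*(n:ℤ) - (t:ℕ)) = (n:ℤ)+(m:ℤ)+1 by push_cast [hndef]; ring]
  have sgn : ((-1 : RatFunc ℚ))^(t+2) = (-1)^t := by
    rw [pow_succ, pow_succ]; ring
  have E1 : c (n+1) m = K * (brace (2*(n:ℤ)) * brace (2*(m:ℤ)) * brace (2*(n:ℤ)+1)) := by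
    rw [c, qbinom, show n+1-m = t+2 by omega]
    rw [show (2*((n+1:ℕ):ℤ)) = 2*(n:ℤ)+2 by push_cast; ring]
    rw [B1, B3, sgn, hK]
    field_simp
  have E2 : c n (m-1) = K * (brace (2*(m:ℤ)-2) * brace ((n:ℤ)+(m:ℤ)+1) * brace ((n:ℤ)+(m:ℤ))) := by
    rw [c, qbinom, show n-(m-1) = t+2 by omega]
    rw [show (2*(((m-1):ℕ):ℤ)) = 2*(m:ℤ)-2 by push_cast [hm]; ring]
    rw [B2, B3, sgn, hK]
    field_simp
  have E3 : c n (m+1) = K * (brace (2*(m:ℤ)+2) * brace ((n:ℤ)-(m:ℤ)) * brace ((n:ℤ)-(m:ℤ)+1)) := by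
    rw [c, qbinom, show n-(m+1) = t by omega]
    rw [show (2*((m+1:ℕ):ℤ)) = 2*(m:ℤ)+2 by push_cast; ring]
    rw [hK]
    field_simp
  have E4 : c n m = -(K * (brace (2*(m:ℤ)) * brace ((n:ℤ)+(m:ℤ)+1) * brace ((n:ℤ)-(m:ℤ)+1))) := by
    rw [c, qbinom, show n-m = t+1 by omega]
    rw [B5, B4, show ((-1 : RatFunc ℚ))^(t+1) = -(-1)^t by rw [pow_succ]; ring, hK]
    field_simp
  rw [E1, E2, E3, E4, aa]
  linear_combination K * star (n:ℤ) (m:ℤ)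

/-- characters -/
def χ (k : ℕ) : LaurentPolynomial (RatFunc ℚ) := ∑ j ∈ Finset.range k, T ((k:ℤ) - 1 - 2*j)

lemma chi_zero : χ 0 = 0 := by simp [χ]

lemma chi_one : χ 1 = 1 := by simp [χ]

lemma chi_mul (k : ℕ) : χ (k+1) * (T 1 + T (-1)) = χ (k+2) + χ k := by
  have expand : ∀ j : ℕ, (T (((k+1:ℕ):ℤ)-1-2*j) : LaurentPolynomial (RatFunc ℚ)) * (T 1 + T (-1))
      = T (((k+2:ℕ):ℤ)-1-2*(j:ℤ)) + T ((k:ℤ)-1-2*(j:ℤ)) := by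
    intro j
    rw [mul_add, ← T_add, ← T_add]
    congr 1 <;> congr 1 <;> push_cast <;> ring
  have hA : (χ (k+2) : LaurentPolynomial (RatFunc ℚ))
      = (∑ j ∈ Finset.range (k+1), T (((k+2:ℕ):ℤ)-1-2*(j:ℤ))) + T ((k:ℤ)-1-2*(k:ℤ)) := by
    rw [χ, Finset.sum_range_succ]
    congr 1
    congr 1
    push_cast
    ring
  have hB : (∑ j ∈ Finset.range (k+1), (T ((k:ℤ)-1-2*(j:ℤ)) : LaurentPolynomial (RatFunc ℚ)))
      = χ k + T ((k:ℤ)-1-2*(k:ℤ)) := by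
    rw [χ, Finset.sum_range_succ]
  rw [χ, Finset.sum_mul]
  rw [Finset.sum_congr rfl (fun j _ => expand j)]
  rw [Finset.sum_add_distrib, hB, hA]
  abel

/-- extended coefficients -/
def d (n i : ℕ) : RatFunc ℚ := if i < n then c n (i+1) else 0

lemma recur {n : ℕ} (hn : 1 ≤ n) (i : ℕ) :
    d (n+1) i = (if i = 0 then 0 else d n (i-1)) + d n (i+1) - aa n * d n i := by
  rcases (by omega : n + 1 ≤ i ∨ i = n ∨ i + 1 = n ∨ i + 2 ≤ n) with h | h | h | h
  · simp only [d, if_neg (by omega : ¬ i < n+1), if_neg (by omega : ¬ i = 0),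
      if_neg (by omega : ¬ i - 1 < n), if_neg (by omega : ¬ i + 1 < n),
      if_neg (by omega : ¬ i < n)]
    ring
  · subst h
    simp only [d, if_pos (by omega : i < i+1), if_neg (by omega : ¬ i = 0),
      if_pos (by omega : i - 1 < i), if_neg (lt_irrefl i), if_neg (by omega : ¬ i + 1 < i),
      show i - 1 + 1 = i by omega]
    rw [caseIII hn]
    ring
  · obtain rfl : n = i + 1 := by omega
    rcases Nat.eq_zero_or_pos i with h0 | h0
    · subst h0
      simp only [d, if_pos (by omega : (0:ℕ) < 2), if_pos rfl,
        if_neg (by omega : ¬ (1:ℕ) < 1), if_pos (by omega : (0:ℕ) < 1), zero_add]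
      rw [caseII (by omega : 1 ≤ 0+1), c_zero]
      norm_num
    · simp only [d, if_pos (by omega : i < i+1+1), if_neg (by omega : ¬ i = 0),
        if_pos (by omega : i - 1 < i+1), if_neg (by omega : ¬ i + 1 < i + 1),
        if_pos (by omega : i < i+1), show i - 1 + 1 = i by omega]
      rw [caseII (by omega : 1 ≤ i+1), show i+1-1 = i from rfl]
      ring
  · rcases Nat.eq_zero_or_pos i with h0 | h0
    · subst h0
      simp only [d, if_pos (by omega : (0:ℕ) < n+1), if_pos rfl,
        if_pos (by omega : (1:ℕ) < n), if_pos (by omega : (0:ℕ) < n), zero_add]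
      rw [caseI (by omega : 1 ≤ 0+1) (by omega : 0 + 1 + 1 ≤ n),
        show 0+1-1 = 0 from rfl, c_zero]
      simp
    · simp only [d, if_pos (by omega : i < n+1), if_neg (by omega : ¬ i = 0),
        if_pos (by omega : i - 1 < n), if_pos (by omega : i + 1 < n),
        if_pos (by omega : i < n), show i - 1 + 1 = i by omega]
      rw [caseI (by omega : 1 ≤ i+1) (by omega : i + 1 + 1 ≤ n),
        show i+1-1 = i from rfl]

lemma shiftA (n : ℕ) :
    ∑ i ∈ Finset.range (n+2), C (d n i) * χ (i+2)
      = ∑ i ∈ Finset.range (n+2), C (if i = 0 then 0 else d n (i-1)) * χ (i+1) := by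
  rw [Finset.sum_range_succ' (fun i => C (if i = 0 then 0 else d n (i-1)) * χ (i+1)) (n+1)]
  simp only [if_pos rfl, map_zero, zero_mul, add_zero, if_neg (Nat.succ_ne_zero _),
    Nat.add_sub_cancel]
  rw [Finset.sum_range_succ (fun i => C (d n i) * χ (i+2)) (n+1)]
  have hz : d n (n+1) = 0 := by rw [d, if_neg (by omega : ¬ n+1 < n)]
  rw [hz, map_zero, zero_mul, add_zero]
  simp

lemma shiftB (n : ℕ) :
    ∑ i ∈ Finset.range (n+2), C (d n i) * χ i
      = ∑ i ∈ Finset.range (n+2), C (d n (i+1)) * χ (i+1) := by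
  rw [Finset.sum_range_succ' (fun i => C (d n i) * χ i) (n+1)]
  rw [Finset.sum_range_succ (fun i => C (d n (i+1)) * χ (i+1)) (n+1)]
  have hz : d n (n+1+1) = 0 := by rw [d, if_neg (by omega : ¬ n+2 < n)]
  rw [hz, map_zero, zero_mul, add_zero, chi_zero, mul_zero, add_zero]

lemma step_sum {n : ℕ} (hn : 1 ≤ n) :
    (∑ i ∈ Finset.range (n+2), C (d n i) * χ (i+1)) * (T 1 + T (-1) - C (aa n))
      = ∑ i ∈ Finset.range (n+2), C (d (n+1) i) * χ (i+1) := by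
  rw [Finset.sum_mul]
  have e1 : ∀ i : ℕ, C (d n i) * χ (i+1) * (T 1 + T (-1) - C (aa n))
      = C (d n i) * χ (i+2) + C (d n i) * χ i - C (aa n * d n i) * χ (i+1) := by
    intro i
    rw [mul_sub, mul_assoc, chi_mul i, mul_add, map_mul]
    ring
  rw [Finset.sum_congr rfl (fun i _ => e1 i)]
  rw [Finset.sum_sub_distrib, Finset.sum_add_distrib, shiftA n, shiftB n]
  rw [← Finset.sum_add_distrib, ← Finset.sum_sub_distrib]
  apply Finset.sum_congr rfl
  intro i _
  rw [recur hn i, map_sub, map_add, map_mul]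
  ring

lemma icc_range {n : ℕ} (f : ℕ → LaurentPolynomial (RatFunc ℚ)) :
    ∑ k ∈ Finset.Icc 1 n, f k = ∑ i ∈ Finset.range n, f (i+1) := by
  induction n with
  | zero => simp
  | succ n ih =>
    rw [Finset.sum_Icc_succ_top (by omega : 1 ≤ n+1), ih, Finset.sum_range_succ]

lemma bridge {n N : ℕ} (hn : n ≤ N) :
    ∑ k ∈ Finset.Icc 1 n, C (c n k) * χ k = ∑ i ∈ Finset.range N, C (d n i) * χ (i+1) := by
  rw [icc_range (fun k => C (c n k) * χ k)]
  rw [← Finset.sum_subset (Finset.range_subset_range.mpr hn)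
    (fun i _ h2 => by
      simp only [Finset.mem_range, not_lt] at h2
      simp [d, if_neg (by omega : ¬ i < n)])]
  apply Finset.sum_congr rfl
  intro i hi
  simp only [Finset.mem_range] at hi
  rw [d, if_pos hi]

theorem main : ∀ n : ℕ, 1 ≤ n →
    ∏ i ∈ Finset.range (n - 1),
        (T 1 + T (-1) - C (v ^ (2 * (i : ℤ) + 1) + v ^ (-(2 * (i : ℤ) + 1)))
          : LaurentPolynomial (RatFunc ℚ))
    = ∑ k ∈ Finset.Icc 1 n, C (c n k) * χ k := by
  intro n hn
  induction n, hn using Nat.le_induction with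
  | base =>
    simp only [Nat.sub_self, Finset.range_zero, Finset.prod_empty, Finset.Icc_self,
      Finset.sum_singleton]
    rw [c_self le_rfl, chi_one, map_one, mul_one]
  | succ n hn ih =>
    have hfac : (T 1 + T (-1) - C (v ^ (2 * ((n-1 : ℕ) : ℤ) + 1) + v ^ (-(2 * ((n-1 : ℕ) : ℤ) + 1)))
        : LaurentPolynomial (RatFunc ℚ)) = T 1 + T (-1) - C (aa n) := by
      congr 2
      rw [aa]
      congr 1 <;> congr 1 <;> push_cast [hn] <;> ring
    rw [show n + 1 - 1 = (n-1) + 1 by omega, Finset.prod_range_succ, ih, hfac,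
      bridge (by omega : n ≤ n + 2), step_sum hn, ← bridge (by omega : n + 1 ≤ n + 2)]


theorem habiro_masbaum_character :
    ∀ n : ℕ, 1 ≤ n →
      ∏ i ∈ Finset.range (n - 1),
          (T 1 + T (-1) - C (v ^ (2 * (i : ℤ) + 1) + v ^ (-(2 * (i : ℤ) + 1)))
            : LaurentPolynomial (RatFunc ℚ))
      = ∑ k ∈ Finset.Icc 1 n,
          C ((-1) ^ (n - k) * (brace (2 * k) / brace (2 * n)) * qbinom (2 * n) (n - k))
            * ∑ j ∈ Finset.range k, T ((k : ℤ) - 1 - 2 * j) := by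
  intro n hn
  have h := main n hn
  simp only [c, χ] at h
  exact h


end Stmt8
end
end

section
/- Define R(n,k) := (−1)^{n-k} {2k}/({2n−1}! [2n]) · [2n choose n−k] and S(k,j) := {k+j−1}_{2j−1}/{1}, both elements of ℚ(v). Then for all integers n, j ≥ 1: Σ_{k=1}^{n} R(n,k) · S(k,j) = δ_{n,j} (Kronecker delta). (Note S(k,j) = 0 for j > k, so the sum is effectively over j ≤ k ≤ n.) -/
/-
Orthogonality of Habiro's cyclotomic transition matrices:
Σ_{k=1}^{n} R(n,k) S(k,j) = δ_{n,j} for n, j ≥ 1, where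
R(n,k) = (−1)^{n-k} {2k}/({2n−1}! [2n]) [2n choose n−k] and
S(k,j) = {k+j−1}_{2j−1}/{1}.
-/

noncomputable section

namespace Stmt9

/-- The variable `v` of the field ℚ(v). -/
def v : RatFunc ℚ := RatFunc.X

/-- `{m} = v^m - v^{-m}`. -/
def brace (m : ℤ) : RatFunc ℚ := v ^ m - v ^ (-m)

/-- `{m}_k = ∏_{i=1}^{k} {m-i+1}`. -/
def braceP (m : ℤ) (k : ℕ) : RatFunc ℚ := ∏ i ∈ Finset.range k, brace (m - i)

/-- `{m}! = ∏_{i=1}^{m} {i}`. -/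
def braceFact (m : ℕ) : RatFunc ℚ := ∏ i ∈ Finset.range m, brace (i + 1)

/-- `[m] = {m}/{1}`. -/
def qint (m : ℤ) : RatFunc ℚ := brace m / brace 1

/-- The balanced q-binomial `[m choose k] = {m}_k / {k}_k`. -/
def qbinom (m : ℤ) (k : ℕ) : RatFunc ℚ := braceP m k / braceP k k

/-- `R(n,k) = (−1)^{n-k} {2k}/({2n−1}! [2n]) [2n choose n−k]`. -/
def R (n k : ℕ) : RatFunc ℚ :=
  (-1) ^ (n - k) * (brace (2 * k) / (braceFact (2 * n - 1) * qint (2 * n)))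
    * qbinom (2 * n) (n - k)

/-- `S(k,j) = {k+j−1}_{2j−1}/{1}`. -/
def S (k j : ℕ) : RatFunc ℚ := braceP ((k : ℤ) + j - 1) (2 * j - 1) / brace 1

lemma v_ne : v ≠ 0 := RatFunc.X_ne_zero

lemma vz_ne (m : ℤ) : v ^ m ≠ 0 := zpow_ne_zero m v_ne

lemma v_npow_ne_one {N : ℕ} (h : N ≠ 0) : v ^ N ≠ 1 := by
  intro hc
  have hX : (RatFunc.X : RatFunc ℚ) = algebraMap (Polynomial ℚ) (RatFunc ℚ) Polynomial.X :=
    (RatFunc.algebraMap_X).symm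
  have : algebraMap (Polynomial ℚ) (RatFunc ℚ) (Polynomial.X ^ N) =
      algebraMap (Polynomial ℚ) (RatFunc ℚ) 1 := by
    rw [map_pow, map_one, ← hX]
    exact hc
  have h2 : (Polynomial.X : Polynomial ℚ) ^ N = 1 := RatFunc.algebraMap_injective ℚ this
  have := congrArg Polynomial.natDegree h2
  simp [Polynomial.natDegree_X_pow] at this
  exact h this

lemma v_zpow_ne_one {m : ℤ} (h : m ≠ 0) : v ^ m ≠ 1 := by
  rcases lt_trichotomy m 0 with hm | hm | hm
  · intro hc
    have : v ^ (-m) = 1 := by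
      have : v ^ m * v ^ (-m) = v ^ (-m) := by rw [hc, one_mul]
      rw [← zpow_add₀ v_ne] at this
      simpa using this.symm
    rw [show -m = ((-m).toNat : ℤ) by omega, zpow_natCast] at this
    exact v_npow_ne_one (by omega) this
  · exact absurd hm h
  · rw [show m = (m.toNat : ℤ) by omega, zpow_natCast]
    exact v_npow_ne_one (by omega)

lemma brace_eq (m : ℤ) : brace m = v ^ (-m) * (v ^ (2*m) - 1) := by
  rw [brace, mul_sub, ← zpow_add₀ v_ne, mul_one]
  ring_nf

lemma brace_ne {m : ℤ} (h : m ≠ 0) : brace m ≠ 0 := by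
  rw [brace_eq]
  exact mul_ne_zero (vz_ne _) (sub_ne_zero_of_ne (v_zpow_ne_one (by omega)))

lemma brace_zero : brace 0 = 0 := by simp [brace]

lemma brace_one_ne : brace 1 ≠ 0 := brace_ne one_ne_zero

lemma braceFact_ne (m : ℕ) : braceFact m ≠ 0 :=
  Finset.prod_ne_zero_iff.2 fun i _ => brace_ne (by positivity)

lemma braceFact_succ (m : ℕ) : braceFact (m+1) = braceFact m * brace (m+1) := by
  rw [braceFact, Finset.prod_range_succ, braceFact]

lemma braceFact_zero : braceFact 0 = 1 := by simp [braceFact]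

lemma braceP_self (d : ℕ) : braceP d d = braceFact d := by
  rw [braceP, braceFact, ← Finset.prod_range_reflect]
  apply Finset.prod_congr rfl
  intro i hi
  simp only [Finset.mem_range] at hi
  congr 1
  omega

lemma braceFact_add (a b : ℕ) : braceFact (a + b) = braceFact a * braceP (a + b) b := by
  rw [braceFact, Finset.prod_range_add, braceFact, braceP]
  congr 1
  rw [← Finset.prod_range_reflect]
  apply Finset.prod_congr rfl
  intro i hi
  simp only [Finset.mem_range] at hi
  congr 1
  push_cast
  omega


-- Part 2
def T (n k : ℕ) : RatFunc ℚ :=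
  (-1) ^ (n - k) * (brace (2*k) * brace k) / (braceFact (n-k) * braceFact (n+k))

lemma braceP_eq_div (a b : ℕ) : braceP (a + b) b = braceFact (a + b) / braceFact a := by
  rw [braceFact_add a b]
  field_simp [braceFact_ne]

lemma R_mul_qint {n k : ℕ} (hn : 1 ≤ n) (hkn : k ≤ n) : R n k * qint k = T n k := by
  have h1 : braceFact (2*n - 1) * qint (2*n) = braceFact (2*n) / brace 1 := by
    have h2n : 2*n = (2*n-1) + 1 := by omega
    rw [qint, h2n, braceFact_succ]
    rw [show (2 * ((n:ℕ):ℤ) : ℤ) = ((2*n-1 : ℕ) : ℤ) + 1 by omega]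
    field_simp [brace_one_ne]
    rw [Nat.add_sub_cancel]; ring
  have h2 : braceP (2*(n:ℤ)) (n-k) = braceFact (2*n) / braceFact (n+k) := by
    have h3 := braceP_eq_div (n+k) (n-k)
    rw [show (((n+k:ℕ):ℤ) + ((n-k:ℕ):ℤ)) = 2*(n:ℤ) by omega] at h3
    rw [h3]
    congr 2
    omega
  rw [R, qbinom, braceP_self, h1, h2, qint, T]
  field_simp [brace_one_ne, braceFact_ne]

-- Part 3
def zz (e : ℤ) : RatFunc ℚ := v ^ (2*e) + v ^ (-(2*e))

lemma zz_neg (e : ℤ) : zz (-e) = zz e := by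
  rw [zz, zz]
  ring_nf

lemma brace_mul_brace (a b : ℤ) : brace (a+b) * brace (a-b) = zz a - zz b := by
  have hA : (v ^ a) ≠ 0 := zpow_ne_zero _ v_ne
  have hB : (v ^ b) ≠ 0 := zpow_ne_zero _ v_ne
  simp only [brace, zz, two_mul, sub_eq_add_neg, neg_add, neg_neg,
    zpow_add₀ v_ne, zpow_neg]
  field_simp
  ring

def p (d : ℕ) : Polynomial (RatFunc ℚ) :=
  ∏ i ∈ Finset.range d, (Polynomial.X - Polynomial.C (zz (i+1)))

lemma p_monic (d : ℕ) : (p d).Monic :=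
  Polynomial.monic_prod_of_monic _ _ fun i _ => Polynomial.monic_X_sub_C _

lemma p_natDegree (d : ℕ) : (p d).natDegree = d := by
  rw [p, Polynomial.natDegree_prod_of_monic _ _ fun i _ => Polynomial.monic_X_sub_C _]
  simp

lemma S_one (k : ℕ) : S k 1 = qint k := by
  rw [S, qint]
  congr 1
  rw [show (2*1-1 : ℕ) = 1 from rfl, braceP, Finset.prod_range_one]
  congr 1
  push_cast
  ring

lemma braceP_succ (a : ℤ) (c : ℕ) : braceP a (c+1) = braceP a c * brace (a - c) :=
  Finset.prod_range_succ _ _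

lemma braceP_shift (a : ℤ) (c : ℕ) : braceP (a+1) (c+1) = brace (a+1) * braceP a c := by
  rw [braceP, Finset.prod_range_succ', braceP]
  have h1 : ∀ i ∈ Finset.range c, brace (a + 1 - (((i+1 : ℕ)) : ℤ)) = brace (a - i) := by
    intro i _
    congr 1
    push_cast
    ring
  rw [Finset.prod_congr rfl h1]
  simp [mul_comm]

lemma braceP_step (a : ℤ) (c : ℕ) :
    braceP (a+1) (c+2) = braceP a c * (brace (a+1) * brace (a - c)) := by
  rw [show c+2 = (c+1)+1 from rfl, braceP_shift, braceP_succ]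
  ring

lemma S_succ (k j : ℕ) (hj : 1 ≤ j) : S k (j+1) = S k j * (zz k - zz j) := by
  obtain ⟨j', rfl⟩ : ∃ j', j = j' + 1 := ⟨j - 1, by omega⟩
  rw [S, S]
  rw [show 2*(j'+1+1)-1 = (2*(j'+1)-1)+2 by omega]
  rw [show ((k:ℤ) + ((j'+1+1 : ℕ):ℤ) - 1) = ((k:ℤ) + ((j'+1 : ℕ):ℤ) - 1) + 1 by push_cast; ring]
  rw [braceP_step]
  rw [show ((k:ℤ) + ((j'+1 : ℕ):ℤ) - 1) + 1 = (k:ℤ) + (j'+1) by push_cast; ring]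
  rw [show ((k:ℤ) + ((j'+1 : ℕ):ℤ) - 1) - ((2*(j'+1)-1 : ℕ):ℤ) = (k:ℤ) - (j'+1) by omega]
  rw [brace_mul_brace (k:ℤ) ((j':ℤ)+1)]
  rw [show ((j'+1:ℕ):ℤ) = (j':ℤ)+1 by push_cast; ring]
  ring

lemma S_closed (k j : ℕ) : S k (j+1) = qint k * (p j).eval (zz k) := by
  induction j with
  | zero => simp [S_one, p]
  | succ j ih =>
    rw [S_succ k (j+1) (by omega), ih]
    have hp : p (j+1) = p j * (Polynomial.X - Polynomial.C (zz ((j:ℤ)+1))) :=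
      Finset.prod_range_succ _ _
    rw [hp, Polynomial.eval_mul]
    simp only [Polynomial.eval_sub, Polynomial.eval_X, Polynomial.eval_C]
    push_cast
    ring

lemma S_eq_zero {k j : ℕ} (h : k < j) : S k j = 0 := by
  rw [S, braceP]
  rw [Finset.prod_eq_zero (i := k + j - 1) (by simp [Finset.mem_range]; omega)]
  · simp
  · rw [show ((k:ℤ) + (j:ℤ) - 1 - ((k + j - 1 : ℕ):ℤ)) = 0 by omega]
    exact brace_zero


def Bb (N k : ℕ) : RatFunc ℚ := braceFact N / (braceFact k * braceFact (N - k))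

lemma Bb_zero (N : ℕ) : Bb N 0 = 1 := by
  rw [Bb, braceFact_zero]
  field_simp [braceFact_ne]
  simp

lemma Bb_self (N : ℕ) : Bb N N = 1 := by
  rw [Bb, Nat.sub_self, braceFact_zero]
  field_simp [braceFact_ne]

lemma pascal_num (a b : ℕ) :
    brace ((a:ℤ)+b+2) = v^((a:ℤ)+1) * brace ((b:ℤ)+1) + (v^((b:ℤ)+1))⁻¹ * brace ((a:ℤ)+1) := by
  have hA : (v ^ ((a:ℤ)+1)) ≠ 0 := zpow_ne_zero _ v_ne
  have hB : (v ^ ((b:ℤ)+1)) ≠ 0 := zpow_ne_zero _ v_ne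
  rw [show (a:ℤ)+b+2 = ((a:ℤ)+1) + ((b:ℤ)+1) by ring]
  simp only [brace, neg_add, zpow_add₀ v_ne, zpow_neg]
  field_simp
  ring

lemma Bb_pascal (a b : ℕ) :
    Bb (a+b+2) (a+1) = v^((a:ℤ)+1) * Bb (a+b+1) (a+1) + (v^((b:ℤ)+1))⁻¹ * Bb (a+b+1) a := by
  have hA : (v ^ ((a:ℤ)+1)) ≠ 0 := zpow_ne_zero _ v_ne
  have hB : (v ^ ((b:ℤ)+1)) ≠ 0 := zpow_ne_zero _ v_ne
  rw [Bb, Bb, Bb, show a+b+2-(a+1) = b+1 by omega, show a+b+1-(a+1) = b by omega,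
    show a+b+1-a = b+1 by omega,
    show a+b+2 = (a+b+1)+1 from rfl, braceFact_succ (a+b+1),
    show a+1 = a+1 from rfl, braceFact_succ a, braceFact_succ b]
  rw [show (((a+b+1:ℕ):ℤ)+1) = (a:ℤ)+b+2 by push_cast; ring] 
  rw [pascal_num a b]
  rw [show (((a:ℕ):ℤ)+1) = (a:ℤ)+1 by push_cast; ring,
      show (((b:ℕ):ℤ)+1) = (b:ℤ)+1 by push_cast; ring]
  have h1 : brace ((a:ℤ)+1) ≠ 0 := brace_ne (by omega)
  have h2 : brace ((b:ℤ)+1) ≠ 0 := brace_ne (by omega)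
  have hfa : braceFact a ≠ 0 := braceFact_ne a
  have hfb : braceFact b ≠ 0 := braceFact_ne b
  set F := braceFact (a+b+1)
  set Fa := braceFact a
  set Fb := braceFact b
  set A := brace ((a:ℤ)+1)
  set B := brace ((b:ℤ)+1)
  set VA := v ^ ((a:ℤ)+1)
  set VB := v ^ ((b:ℤ)+1)
  rw [← mul_div_assoc, ← mul_div_assoc,
      div_add_div _ _ (mul_ne_zero (mul_ne_zero hfa h1) hfb)
        (mul_ne_zero hfa (mul_ne_zero hfb h2)),
      div_eq_div_iff (mul_ne_zero (mul_ne_zero hfa h1) (mul_ne_zero hfb h2))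
        (mul_ne_zero (mul_ne_zero (mul_ne_zero hfa h1) hfb)
          (mul_ne_zero hfa (mul_ne_zero hfb h2)))]
  ring



lemma qbinom_thm (N : ℕ) (x y : RatFunc ℚ) :
    ∏ r ∈ Finset.range N, (x + v^((N:ℤ)-1-2*r) * y)
      = ∑ k ∈ Finset.range (N+1), Bb N k * x^(N-k) * y^k := by
  induction N generalizing y with
  | zero => simp [Bb_zero]
  | succ N ih =>
    have step1 : ∏ r ∈ Finset.range (N+1), (x + v^(((N+1:ℕ):ℤ)-1-2*r) * y)
        = (∏ r ∈ Finset.range N, (x + v^((N:ℤ)-1-2*r) * (v*y))) * (x + v^(-(N:ℤ)) * y) := by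
      rw [Finset.prod_range_succ]
      congr 1
      · apply Finset.prod_congr rfl
        intro r _
        have hv : v^(((N+1:ℕ):ℤ)-1-2*r) = v^((N:ℤ)-1-2*r) * v := by
          have h' : v^((N:ℤ)-1-2*r) * v^(1:ℤ) = v^((N:ℤ)-1-2*r+1) := (zpow_add₀ v_ne _ _).symm
          rw [zpow_one] at h'
          rw [h']
          congr 1
          push_cast
          ring
        rw [hv]
        ring
      · congr 2
        congr 1
        push_cast
        ring
    rw [step1, ih (v*y)]
    have expand : (∑ k ∈ Finset.range (N+1), Bb N k * x^(N-k) * (v*y)^k) * (x + v^(-(N:ℤ)) * y)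
        = (∑ k ∈ Finset.range (N+1), Bb N k * v^(k:ℤ) * x^(N-k+1) * y^k)
          + (∑ k ∈ Finset.range (N+1), Bb N k * v^((k:ℤ)-N) * x^(N-k) * y^(k+1)) := by
      rw [Finset.sum_mul, ← Finset.sum_add_distrib]
      apply Finset.sum_congr rfl
      intro k _
      rw [mul_pow]
      have h1 : (v:RatFunc ℚ)^k = v^(k:ℤ) := (zpow_natCast v k).symm
      have h2 : v^((k:ℤ)-N) = v^(k:ℤ) * v^(-(N:ℤ)) := by
        rw [← zpow_add₀ v_ne]; congr 1
      rw [h1, h2, pow_succ, pow_succ]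
      ring
    rw [expand]
    have lhs1 : (∑ k ∈ Finset.range (N+1), Bb N k * v^(k:ℤ) * x^(N-k+1) * y^k)
        = x^(N+1) + ∑ k ∈ Finset.range N, Bb N (k+1) * v^((k:ℤ)+1) * x^(N-k) * y^(k+1) := by
      rw [Finset.sum_range_succ']
      rw [Bb_zero]
      have : ∀ k ∈ Finset.range N, Bb N (k+1) * v^(((k+1:ℕ)):ℤ) * x^(N-(k+1)+1) * y^(k+1)
          = Bb N (k+1) * v^((k:ℤ)+1) * x^(N-k) * y^(k+1) := by
        intro k hk
        simp only [Finset.mem_range] at hk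
        rw [show (((k+1:ℕ)):ℤ) = (k:ℤ)+1 by push_cast; ring, show N-(k+1)+1 = N-k by omega]
      rw [Finset.sum_congr rfl this]
      simp
      ring
    have lhs2 : (∑ k ∈ Finset.range (N+1), Bb N k * v^((k:ℤ)-N) * x^(N-k) * y^(k+1))
        = (∑ k ∈ Finset.range N, Bb N k * v^((k:ℤ)-N) * x^(N-k) * y^(k+1)) + y^(N+1) := by
      rw [Finset.sum_range_succ, Bb_self]
      simp
    have rhs1 : (∑ k ∈ Finset.range (N+1+1), Bb (N+1) k * x^(N+1-k) * y^k)
        = x^(N+1) + ((∑ k ∈ Finset.range N, Bb (N+1) (k+1) * x^(N-k) * y^(k+1)) + y^(N+1)) := by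
      rw [Finset.sum_range_succ', Finset.sum_range_succ, Bb_zero, Bb_self]
      have : ∀ k ∈ Finset.range N, Bb (N+1) (k+1) * x^(N+1-(k+1)) * y^(k+1)
          = Bb (N+1) (k+1) * x^(N-k) * y^(k+1) := by
        intro k _
        rw [show N+1-(k+1) = N-k by omega]
      rw [Finset.sum_congr rfl this]
      simp
      ring
    rw [lhs1, lhs2, rhs1, add_assoc]
    congr 1
    rw [← add_assoc, ← Finset.sum_add_distrib]
    congr 1
    apply Finset.sum_congr rfl
    intro k hk
    simp only [Finset.mem_range] at hk
    have hp := Bb_pascal k (N-k-1)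
    rw [show k+(N-k-1)+2 = N+1 by omega, show k+(N-k-1)+1 = N by omega] at hp
    rw [hp]
    have hv : (v^(((N-k-1:ℕ):ℤ)+1))⁻¹ = v^((k:ℤ)-N) := by
      rw [← zpow_neg]
      congr 1
      omega
    rw [hv]
    ring


def Phi (n : ℕ) (t : ℤ) : RatFunc ℚ :=
  ∑ i ∈ Finset.range (2*n+1), (-1:RatFunc ℚ)^i * v^(((n:ℤ)-i)*t) / (braceFact i * braceFact (2*n-i))

lemma prod_v_zpow (m : ℕ) (f : ℕ → ℤ) :
    ∏ r ∈ Finset.range m, v ^ (f r) = v ^ (∑ r ∈ Finset.range m, f r) := by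
  induction m with
  | zero => simp
  | succ m ih => rw [Finset.prod_range_succ, Finset.sum_range_succ, ih, ← zpow_add₀ v_ne]

lemma Phi_prod (n : ℕ) (t : ℤ) :
    braceFact (2*n) * Phi n t
      = v^((n:ℤ)*t) * ∏ r ∈ Finset.range (2*n), (1 - v^(2*(n:ℤ)-1-2*r-t)) := by
  have key := qbinom_thm (2*n) 1 (-v^(-t))
  have hL : ∏ r ∈ Finset.range (2*n), ((1:RatFunc ℚ) + v^(((2*n:ℕ):ℤ)-1-2*r) * (-v^(-t)))
      = ∏ r ∈ Finset.range (2*n), (1 - v^(2*(n:ℤ)-1-2*r-t)) := by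
    apply Finset.prod_congr rfl
    intro r _
    have he : ((2*n:ℕ):ℤ)-1-2*(r:ℤ) + -t = 2*(n:ℤ)-1-2*r-t := by push_cast; ring
    have : v^(((2*n:ℕ):ℤ)-1-2*r) * v^(-t) = v^(2*(n:ℤ)-1-2*r-t) := by
      rw [← zpow_add₀ v_ne, he]
    rw [show v^(((2*n:ℕ):ℤ)-1-2*r) * -v^(-t) = -(v^(((2*n:ℕ):ℤ)-1-2*r) * v^(-t)) by ring, this]
    ring
  rw [hL] at key
  rw [key, Phi, Finset.mul_sum, Finset.mul_sum]
  apply Finset.sum_congr rfl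
  intro i hi
  simp only [Finset.mem_range] at hi
  have h1 : (-v^(-t) : RatFunc ℚ)^i = (-1)^i * v^(-(t*i)) := by
    rw [neg_pow]
    congr 1
    rw [← zpow_natCast (v^(-t)) i, ← zpow_mul]
    congr 1
    ring
  have h2 : v^((n:ℤ)*t) * v^(-(t*i)) = v^(((n:ℤ)-i)*t) := by
    rw [← zpow_add₀ v_ne]
    congr 1
    ring
  rw [h1, one_pow, Bb, ← h2, zpow_neg]
  have hvi : v ^ (t * (i:ℤ)) ≠ 0 := zpow_ne_zero _ v_ne
  field_simp [braceFact_ne]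

lemma Phi_symm (n : ℕ) (t : ℤ) : Phi n (-t) = Phi n t := by
  rw [Phi, Phi]
  rw [← Finset.sum_range_reflect]
  apply Finset.sum_congr rfl
  intro j hj
  simp only [Finset.mem_range] at hj
  have hj' : j ≤ 2*n := by omega
  have e1 : (2*n+1-1-j) = 2*n - j := by omega
  rw [e1]
  have e2 : ((-1:RatFunc ℚ))^(2*n-j) = (-1)^j := by
    have : ((-1:RatFunc ℚ))^(2*n-j) * (-1)^j = 1 := by
      rw [← pow_add, show 2*n-j+j = 2*n by omega]
      exact Even.neg_one_pow ⟨n, two_mul n⟩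
    have h2 : ((-1:RatFunc ℚ))^j * (-1)^j = 1 := by
      rw [← pow_add]
      exact Even.neg_one_pow ⟨j, rfl⟩
    calc ((-1:RatFunc ℚ))^(2*n-j) = ((-1:RatFunc ℚ))^(2*n-j) * ((-1)^j * (-1)^j) := by rw [h2]; ring
      _ = (((-1:RatFunc ℚ))^(2*n-j) * (-1)^j) * (-1)^j := by ring
      _ = (-1)^j := by rw [this]; ring
  have e3 : (((n:ℤ) - (2*n-j : ℕ)) * (-t)) = ((n:ℤ)-j) * t := by
    push_cast [Nat.cast_sub hj']
    ring
  have e4 : 2*n - (2*n-j) = j := by omega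
  rw [e2, e3, e4, mul_comm (braceFact j) (braceFact (2*n-j))]

lemma Phi_vanish (n : ℕ) (s : ℤ) (h1 : -(n:ℤ) ≤ s) (h2 : s ≤ (n:ℤ)-1) : Phi n (2*s+1) = 0 := by
  have hprod := Phi_prod n (2*s+1)
  have hn : 1 ≤ n := by omega
  set r0 : ℕ := ((n:ℤ)-1-s).toNat with hr0
  have hr0' : (r0:ℤ) = (n:ℤ)-1-s := by rw [hr0]; omega
  have hmem : r0 ∈ Finset.range (2*n) := by
    simp only [Finset.mem_range]
    omega
  have hfac : (1:RatFunc ℚ) - v^(2*(n:ℤ)-1-2*r0-(2*s+1)) = 0 := by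
    rw [show 2*(n:ℤ)-1-2*r0-(2*s+1) = 0 by omega]
    simp
  have : braceFact (2*n) * Phi n (2*s+1) = 0 := by
    rw [hprod, Finset.prod_eq_zero hmem hfac]
    ring
  rcases mul_eq_zero.1 this with h | h
  · exact absurd h (braceFact_ne _)
  · exact h

lemma sum_range_cast (m : ℕ) : (∑ r ∈ Finset.range m, ((r:ℤ)+1)) * 2 = m*(m+1) := by
  induction m with
  | zero => simp
  | succ m ih =>
    rw [Finset.sum_range_succ]
    push_cast
    push_cast at ih
    linear_combination ih

lemma brace_eq' (m : ℤ) : brace m = v^m * (1 - v^(-(2*m))) := by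
  have he : m + -(2*m) = -m := by ring
  rw [brace, mul_sub, mul_one, ← zpow_add₀ v_ne, he]

lemma Phi_top (n : ℕ) : Phi n (2*(n:ℤ)+1) = 1 := by
  have hprod := Phi_prod n (2*(n:ℤ)+1)
  have hbf : braceFact (2*n) = v^((n:ℤ)*(2*(n:ℤ)+1)) * ∏ r ∈ Finset.range (2*n), (1 - v^(2*(n:ℤ)-1-2*r-(2*(n:ℤ)+1))) := by
    rw [braceFact]
    have : ∀ r ∈ Finset.range (2*n), brace (r+1)
        = v^((r:ℤ)+1) * (1 - v^(2*(n:ℤ)-1-2*r-(2*(n:ℤ)+1))) := by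
      intro r _
      have e1 : 2*(n:ℤ)-1-2*(r:ℤ)-(2*(n:ℤ)+1) = -(2*((r:ℤ)+1)) := by ring
      rw [e1, brace_eq']
    rw [Finset.prod_congr rfl this, Finset.prod_mul_distrib, prod_v_zpow]
    congr 2
    have hs := sum_range_cast (2*n)
    push_cast at hs
    linarith
  rw [← hbf] at hprod
  have := mul_left_cancel₀ (braceFact_ne (2*n)) (hprod.trans (mul_one (braceFact (2*n))).symm)
  exact this


def Lsum (n m : ℕ) : RatFunc ℚ := ∑ k ∈ Finset.Icc 1 n, T n k * (zz k)^m

lemma v_zpow_pow (a : ℤ) (u : ℕ) : (v^a)^u = v^(a*u) := by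
  rw [← zpow_natCast (v^a) u, ← zpow_mul]

lemma binom_z (e : ℤ) (m : ℕ) :
    ∑ u ∈ Finset.range (m+1), (m.choose u : RatFunc ℚ) * v^(2*e*((m:ℤ)-2*u)) = (zz e)^m := by
  rw [zz, add_comm (v^(2*e)), add_pow]
  apply Finset.sum_congr rfl
  intro u hu
  simp only [Finset.mem_range] at hu
  rw [v_zpow_pow, v_zpow_pow, ← zpow_add₀ v_ne]
  rw [show (-(2*e))*(u:ℤ) + 2*e*((m-u:ℕ):ℤ) = 2*e*((m:ℤ)-2*u) by
    push_cast [Nat.cast_sub (by omega : u ≤ m)]; ring]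
  ring

lemma neg_one_pow_flip {i N : ℕ} (h : i ≤ 2*N) : ((-1:RatFunc ℚ))^(2*N-i) = (-1)^i := by
  have key : ((-1:RatFunc ℚ))^(2*N-i) * (-1)^i = 1 := by
    rw [← pow_add, show 2*N-i+i = 2*N by omega]
    exact Even.neg_one_pow ⟨N, two_mul N⟩
  have h2 : ((-1:RatFunc ℚ))^i * (-1)^i = 1 := by
    rw [← pow_add]
    exact Even.neg_one_pow ⟨i, rfl⟩
  calc ((-1:RatFunc ℚ))^(2*N-i) = ((-1:RatFunc ℚ))^(2*N-i) * ((-1)^i * (-1)^i) := by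
        rw [h2]; ring
    _ = (((-1:RatFunc ℚ))^(2*N-i) * (-1)^i) * (-1)^i := by ring
    _ = (-1)^i := by rw [key]; ring

lemma brace2_brace (e : ℤ) :
    brace (2*e) * brace e = (v^(3*e) - v^e) + (v^(-(3*e)) - v^(-e)) := by
  have hA : (v^e) ≠ 0 := zpow_ne_zero _ v_ne
  rw [brace, brace, show 2*e = e+e by ring, show 3*e = e+e+e by ring]
  simp only [neg_add, zpow_add₀ v_ne, zpow_neg]
  field_simp
  ring

lemma sum_reflect_split (f : ℕ → RatFunc ℚ) (n : ℕ) :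
    ∑ i ∈ Finset.range (2*n+1), f i
      = (∑ i ∈ Finset.range n, (f i + f (2*n-i))) + f n := by
  rw [show 2*n+1 = n + (n+1) by omega, Finset.sum_range_add, Finset.sum_range_succ']
  have h1 : ∑ i ∈ Finset.range n, f (n + (i+1)) = ∑ i ∈ Finset.range n, f (2*n - i) := by
    rw [← Finset.sum_range_reflect (fun i => f (n + (i+1))) n]
    apply Finset.sum_congr rfl
    intro i hi
    simp only [Finset.mem_range] at hi
    congr 1
    omega
  rw [h1, Finset.sum_add_distrib]
  ring

lemma sum_Icc_one (g : ℕ → RatFunc ℚ) (n : ℕ) :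
    ∑ k ∈ Finset.Icc 1 n, g k = ∑ i ∈ Finset.range n, g (i+1) := by
  induction n with
  | zero => simp
  | succ n ih =>
    rw [Finset.sum_Icc_succ_top (by omega), ih, Finset.sum_range_succ]

lemma L_eq (n m : ℕ) :
    Lsum n m = ∑ u ∈ Finset.range (m+1), (m.choose u : RatFunc ℚ) *
      (Phi n (2*((m:ℤ)-2*u)+3) - Phi n (2*((m:ℤ)-2*u)+1)) := by
  -- F i
  set F : ℕ → RatFunc ℚ := fun i =>
    (-1:RatFunc ℚ)^i * ((v^(3*((n:ℤ)-i)) - v^((n:ℤ)-i)) * (zz ((n:ℤ)-i))^m)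
      / (braceFact i * braceFact (2*n-i)) with hF
  -- step A : RHS = ∑_{i<2n+1} F i
  have stepA : ∑ u ∈ Finset.range (m+1), (m.choose u : RatFunc ℚ) *
      (Phi n (2*((m:ℤ)-2*u)+3) - Phi n (2*((m:ℤ)-2*u)+1))
      = ∑ i ∈ Finset.range (2*n+1), F i := by
    have hPhiDiff : ∀ a b : ℤ, Phi n a - Phi n b
        = ∑ i ∈ Finset.range (2*n+1),
            (-1:RatFunc ℚ)^i * (v^(((n:ℤ)-i)*a) - v^(((n:ℤ)-i)*b))
              / (braceFact i * braceFact (2*n-i)) := by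
      intro a b
      rw [Phi, Phi, ← Finset.sum_sub_distrib]
      apply Finset.sum_congr rfl
      intro i _
      ring
    have h1 : ∀ u ∈ Finset.range (m+1), (m.choose u : RatFunc ℚ) *
        (Phi n (2*((m:ℤ)-2*u)+3) - Phi n (2*((m:ℤ)-2*u)+1))
        = ∑ i ∈ Finset.range (2*n+1), (m.choose u : RatFunc ℚ) *
            ((-1:RatFunc ℚ)^i * (v^(((n:ℤ)-i)*(2*((m:ℤ)-2*u)+3)) - v^(((n:ℤ)-i)*(2*((m:ℤ)-2*u)+1)))
              / (braceFact i * braceFact (2*n-i))) := by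
      intro u _
      rw [hPhiDiff, Finset.mul_sum]
    rw [Finset.sum_congr rfl h1, Finset.sum_comm]
    apply Finset.sum_congr rfl
    intro i _
    set e : ℤ := (n:ℤ) - i with he
    have hva : ∀ u : ℕ, v^(e*(2*((m:ℤ)-2*u)+3)) = v^(3*e) * v^(2*e*((m:ℤ)-2*u)) := by
      intro u
      rw [← zpow_add₀ v_ne]
      congr 1
      ring
    have hvb : ∀ u : ℕ, v^(e*(2*((m:ℤ)-2*u)+1)) = v^e * v^(2*e*((m:ℤ)-2*u)) := by
      intro u
      rw [← zpow_add₀ v_ne]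
      congr 1
      ring
    have h2 : ∀ u ∈ Finset.range (m+1), (m.choose u : RatFunc ℚ) *
        ((-1:RatFunc ℚ)^i * (v^(e*(2*((m:ℤ)-2*u)+3)) - v^(e*(2*((m:ℤ)-2*u)+1)))
          / (braceFact i * braceFact (2*n-i)))
        = ((-1:RatFunc ℚ)^i / (braceFact i * braceFact (2*n-i))) *
            (v^(3*e) * ((m.choose u : RatFunc ℚ) * v^(2*e*((m:ℤ)-2*u)))
             - v^e * ((m.choose u : RatFunc ℚ) * v^(2*e*((m:ℤ)-2*u)))) := by
      intro u _
      rw [hva, hvb]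
      ring
    rw [Finset.sum_congr rfl h2, ← Finset.mul_sum, Finset.sum_sub_distrib,
      ← Finset.mul_sum, ← Finset.mul_sum, binom_z]
    rw [hF]
    ring
  rw [stepA, sum_reflect_split]
  -- F n = 0
  have hFn : F n = 0 := by
    rw [hF]
    simp only [sub_self]
    norm_num
  rw [hFn, add_zero]
  -- LHS
  rw [Lsum, sum_Icc_one]
  rw [← Finset.sum_range_reflect (fun i => T n (i+1) * (zz ((i+1 : ℕ) : ℤ))^m) n]
  apply Finset.sum_congr rfl
  intro i hi
  simp only [Finset.mem_range] at hi
  have hkn : n - 1 - i + 1 = n - i := by omega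
  rw [hkn]
  -- now : T n (n-i) * zz(n-i)^m = F i + F (2n-i)
  have hin : i ≤ n := by omega
  have hi2n : i ≤ 2*n := by omega
  have hcast : ((n - i : ℕ) : ℤ) = (n:ℤ) - i := by omega
  have hcast2 : ((2*(n-i) : ℕ) : ℤ) = 2*((n:ℤ) - i) := by omega
  have hcast3 : ((n:ℤ) - ((2*n - i : ℕ) : ℤ)) = -((n:ℤ) - i) := by omega
  rw [T, show n - (n-i) = i by omega, show n + (n-i) = 2*n - i by omega]
  rw [hF]
  simp only []
  rw [hcast, hcast3, zz_neg, neg_one_pow_flip hi2n,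
    show 2*n - (2*n-i) = i by omega]
  rw [show braceFact (2*n-i) * braceFact i = braceFact i * braceFact (2*n-i) by ring]
  rw [← add_div, div_mul_eq_mul_div]
  congr 1
  rw [brace2_brace ((n:ℤ)-i)]
  rw [show (3:ℤ) * -((n:ℤ)-i) = -(3*((n:ℤ)-i)) by ring]
  ring

lemma L_val (n m : ℕ) (hn : 1 ≤ n) (hm : m ≤ n - 1) :
    Lsum n m = if m = n - 1 then 1 else 0 := by
  rw [L_eq]
  by_cases hcase : m = n - 1
  · rw [if_pos hcase]
    rw [Finset.sum_eq_single_of_mem 0 (by simp)]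
    · have h0 : 2*((m:ℤ) - 2*(0:ℕ)) + 3 = 2*(n:ℤ) + 1 := by
        push_cast
        omega
      have h1 : Phi n (2*((m:ℤ) - 2*(0:ℕ)) + 1) = 0 := by
        apply Phi_vanish n ((m:ℤ) - 2*(0:ℕ)) <;> push_cast <;> omega
      rw [h0, Phi_top, h1]
      simp
    · intro u hu hu0
      simp only [Finset.mem_range] at hu
      have h1 : Phi n (2*((m:ℤ) - 2*u) + 1) = 0 := by
        apply Phi_vanish n ((m:ℤ) - 2*u) <;> push_cast <;> omega
      have h2 : Phi n (2*((m:ℤ) - 2*u) + 3) = 0 := by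
        rw [show 2*((m:ℤ) - 2*u) + 3 = 2*((m:ℤ) - 2*u + 1) + 1 by ring]
        apply Phi_vanish n ((m:ℤ) - 2*u + 1) <;> push_cast <;> omega
      rw [h1, h2]
      simp
  · rw [if_neg hcase]
    apply Finset.sum_eq_zero
    intro u hu
    simp only [Finset.mem_range] at hu
    have hm' : m < n - 1 := by omega
    have h1 : Phi n (2*((m:ℤ) - 2*u) + 1) = 0 := by
      apply Phi_vanish n ((m:ℤ) - 2*u) <;> push_cast <;> omega
    have h2 : Phi n (2*((m:ℤ) - 2*u) + 3) = 0 := by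
      rw [show 2*((m:ℤ) - 2*u) + 3 = 2*((m:ℤ) - 2*u + 1) + 1 by ring]
      apply Phi_vanish n ((m:ℤ) - 2*u + 1) <;> push_cast <;> omega
    rw [h1, h2]
    simp


theorem R_S_orthogonality :
    ∀ n j : ℕ, 1 ≤ n → 1 ≤ j →
      ∑ k ∈ Finset.Icc 1 n, R n k * S k j = if n = j then 1 else 0 := by
  intro n j hn hj
  by_cases hjn : n < j
  · rw [if_neg (by omega)]
    apply Finset.sum_eq_zero
    intro k hk
    simp only [Finset.mem_Icc] at hk
    rw [S_eq_zero (by omega)]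
    ring
  · push_neg at hjn
    have hstep : ∀ k ∈ Finset.Icc 1 n, R n k * S k j = T n k * (p (j-1)).eval (zz k) := by
      intro k hk
      simp only [Finset.mem_Icc] at hk
      have : S k j = qint k * (p (j-1)).eval (zz k) := by
        rw [show j = (j-1)+1 by omega] at *
        exact S_closed k (j-1)
      rw [this, ← mul_assoc, R_mul_qint hn hk.2]
    rw [Finset.sum_congr rfl hstep]
    have hdeg : (p (j-1)).natDegree < j := by rw [p_natDegree]; omega
    have heval : ∀ k ∈ Finset.Icc 1 n, T n k * (p (j-1)).eval (zz k)
        = ∑ m ∈ Finset.range j, (p (j-1)).coeff m * (T n k * (zz k)^m) := by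
      intro k _
      rw [Polynomial.eval_eq_sum_range' hdeg, Finset.mul_sum]
      apply Finset.sum_congr rfl
      intro m _
      ring
    rw [Finset.sum_congr rfl heval, Finset.sum_comm]
    have hLs : ∀ m ∈ Finset.range j, (∑ k ∈ Finset.Icc 1 n, (p (j-1)).coeff m * (T n k * (zz k)^m))
        = (p (j-1)).coeff m * Lsum n m := by
      intro m _
      rw [Lsum, Finset.mul_sum]
    rw [Finset.sum_congr rfl hLs]
    have hLv : ∀ m ∈ Finset.range j, (p (j-1)).coeff m * Lsum n m
        = if m = n-1 then (p (j-1)).coeff m else 0 := by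
      intro m hm
      simp only [Finset.mem_range] at hm
      rw [L_val n m hn (by omega)]
      split_ifs <;> ring
    rw [Finset.sum_congr rfl hLv, Finset.sum_ite_eq' (Finset.range j) (n-1) ((p (j-1)).coeff ·)]
    by_cases hje : j = n
    · subst hje
      rw [if_pos (by simp [Finset.mem_range]; omega), if_pos rfl]
      have := (p_monic (j-1)).coeff_natDegree
      rw [p_natDegree] at this
      exact this
    · rw [if_neg (by simp [Finset.mem_range]; omega), if_neg (by omega)]


end Stmt9
end
end

section
/- Let U⁻ be the ℚ(v)-algebra presented by generators F_α, F_β and the two quantum Serre relations F_α² F_β − (v + v^{-1}) F_α F_β F_α + F_β F_α² = 0 and F_β² F_α − (v + v^{-1}) F_β F_α F_β + F_α F_β² = 0. Set f₂ := F_β F_α − v F_α F_β and f₂' := F_α F_β − v F_β F_α. Then for all n ∈ ℕ the following identity holds in U⁻: (f₂')^n = (−v)^{-n} Σ_{k=0}^{n} v^{-k(k-3)/2} (v − v^{-1})^k [n choose k] F_β^k f₂^{n-k} F_α^k. -/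
/-
In U⁻ of U_v(sl₃) (type A₂), with f₂ = F_β F_α − v F_α F_β and
f₂' = F_α F_β − v F_β F_α, one has for all n:
(f₂')^n = (−v)^{-n} Σ_{k=0}^{n} v^{-k(k-3)/2} (v − v⁻¹)^k [n choose k] F_β^k f₂^{n-k} F_α^k.
-/

noncomputable section

namespace Stmt11

/-- The variable `v` of the field ℚ(v). -/
def v : RatFunc ℚ := RatFunc.X

/-- Generators: 0 = F_α, 1 = F_β. -/
abbrev Free := FreeAlgebra (RatFunc ℚ) (Fin 2)

def ga : Free := FreeAlgebra.ι _ 0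
def gb : Free := FreeAlgebra.ι _ 1

/-- The quantum Serre relations of type A₂. -/
inductive Rel : Free → Free → Prop
  | serre₁ : Rel (ga * ga * gb + gb * ga * ga) ((v + v⁻¹) • (ga * gb * ga))
  | serre₂ : Rel (gb * gb * ga + ga * gb * gb) ((v + v⁻¹) • (gb * ga * gb))

/-- The negative part U⁻ of U_v(sl₃). -/
abbrev Um := RingQuot Rel

def Fα : Um := RingQuot.mkAlgHom (RatFunc ℚ) Rel ga
def Fβ : Um := RingQuot.mkAlgHom (RatFunc ℚ) Rel gb

/-- PBW root vector `f₂ = T_α(F_β) = F_β F_α − v F_α F_β`. -/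
def f₂ : Um := Fβ * Fα - v • (Fα * Fβ)

/-- PBW root vector `f₂' = T_β(F_α) = F_α F_β − v F_β F_α`. -/
def f₂' : Um := Fα * Fβ - v • (Fβ * Fα)

/-- `[m] = (v^m − v^{-m})/(v − v⁻¹)`. -/
def qint (m : ℤ) : RatFunc ℚ := (v ^ m - v ^ (-m)) / (v - v⁻¹)

/-- `[m]! = ∏_{i=1}^m [i]`. -/
def qfact (m : ℕ) : RatFunc ℚ := ∏ i ∈ Finset.range m, qint (i + 1)

/-- `[n choose k] = [n]!/([k]! [n−k]!)`. -/
def qbinom (n k : ℕ) : RatFunc ℚ := qfact n / (qfact k * qfact (n - k))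


/-! ### Generic algebra layer -/

section Generic
variable {K A : Type} [Field K] [Ring A] [Algebra K A]
variable (w : K) (a b : A)

def gf : A := b*a - w•(a*b)
def gf' : A := a*b - w•(b*a)

variable {w a b}
variable (hw : w ≠ 0)
variable (hsa : a*a*b + b*a*a = (w+w⁻¹) • (a*b*a))
variable (hsb : b*b*a + a*b*b = (w+w⁻¹) • (b*a*b))

include hw in
lemma gcancel {x y : A} (h : w • x = w • y) : x = y := by
  have h2 := congrArg (fun z => w⁻¹ • z) h
  simp only [smul_smul, inv_mul_cancel₀ hw, one_smul] at h2
  exact h2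

section
include hsa
lemma gh1 : b*(a*a) = (w+w⁻¹) • (a*(b*a)) - a*(a*b) := by
  rw [eq_sub_iff_add_eq, add_comm]
  simpa only [mul_assoc] using hsa

include hw
lemma gcomm_af : a * gf w a b = w • (gf w a b * a) := by
  rw [gf]
  simp only [mul_sub, sub_mul, smul_mul_assoc, mul_smul_comm, smul_sub, smul_smul, mul_assoc]
  rw [gh1 hsa]
  match_scalars <;> field_simp <;> ring
end

section
include hsb
lemma gh2 : a*(b*b) = (w+w⁻¹) • (b*(a*b)) - b*(b*a) := by
  rw [eq_sub_iff_add_eq, add_comm]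
  simpa only [mul_assoc] using hsb

include hw
lemma gcomm_fb : gf w a b * b = w • (b * gf w a b) := by
  rw [gf]
  simp only [mul_sub, sub_mul, smul_mul_assoc, mul_smul_comm, smul_sub, smul_smul, mul_assoc]
  rw [gh2 hsb]
  match_scalars <;> field_simp <;> ring

lemma gA3 : gf' w a b * b = w⁻¹ • (b * gf' w a b) := by
  rw [gf']
  simp only [mul_sub, sub_mul, smul_mul_assoc, mul_smul_comm, smul_sub, smul_smul, mul_assoc]
  rw [gh2 hsb]
  match_scalars <;> field_simp <;> ring
end

lemma gA6 : gf' w a b = (1 - w^2) • (a * b) - w • gf w a b := by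
  rw [gf', gf]
  match_scalars <;> ring

include hw in
lemma gA5mul (x : A) : a * (b * x) = w⁻¹ • (b * (a * x)) - w⁻¹ • (gf w a b * x) := by
  rw [gf]
  simp only [mul_sub, sub_mul, smul_mul_assoc, mul_smul_comm, smul_sub, smul_smul, mul_assoc]
  match_scalars <;> field_simp <;> ring

include hw hsa hsb

lemma gcomm_f_ab : gf w a b * (a * b) = (a * b) * gf w a b := by
  apply gcancel hw
  calc w • (gf w a b * (a * b))
      = (w • (gf w a b * a)) * b := by rw [smul_mul_assoc, mul_assoc]
    _ = a * (gf w a b * b) := by rw [← gcomm_af hw hsa, mul_assoc]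
    _ = a * (w • (b * gf w a b)) := by rw [gcomm_fb hw hsb]
    _ = w • ((a * b) * gf w a b) := by rw [mul_smul_comm, mul_assoc]

lemma gcomm_ff' : Commute (gf' w a b) (gf w a b) := by
  have c1 : Commute (a * b) (gf w a b) := (gcomm_f_ab hw hsa hsb).symm
  have c2 : Commute ((1 - w^2) • (a * b) - w • gf w a b) (gf w a b) :=
    (c1.smul_left _).sub_left ((Commute.refl (gf w a b)).smul_left _)
  rwa [← gA6] at c2

lemma gP1 (m : ℕ) (x : A) : a * (gf w a b ^ m * x) = (w ^ m) • (gf w a b ^ m * (a * x)) := by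
  induction m generalizing x with
  | zero => simp
  | succ m ih =>
    calc a * (gf w a b ^ (m+1) * x)
        = a * (gf w a b ^ m * (gf w a b * x)) := by rw [pow_succ, mul_assoc]
      _ = w ^ m • (gf w a b ^ m * (a * (gf w a b * x))) := ih _
      _ = w ^ m • (gf w a b ^ m * ((w • (gf w a b * a)) * x)) := by
            rw [← mul_assoc a, gcomm_af hw hsa]
      _ = (w ^ m * w) • (gf w a b ^ m * (gf w a b * (a * x))) := by
            rw [smul_mul_assoc, mul_smul_comm, smul_smul, mul_assoc]
      _ = (w ^ (m+1)) • (gf w a b ^ (m+1) * (a * x)) := by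
            rw [← pow_succ, ← mul_assoc (gf w a b ^ m), ← pow_succ]

lemma gP3 (k : ℕ) (x : A) :
    gf' w a b * (b ^ k * x) = ((w ^ k)⁻¹) • (b ^ k * (gf' w a b * x)) := by
  induction k generalizing x with
  | zero => simp
  | succ k ih =>
    calc gf' w a b * (b ^ (k+1) * x)
        = gf' w a b * (b ^ k * (b * x)) := by rw [pow_succ, mul_assoc]
      _ = (w ^ k)⁻¹ • (b ^ k * (gf' w a b * (b * x))) := ih _
      _ = (w ^ k)⁻¹ • (b ^ k * ((w⁻¹ • (b * gf' w a b)) * x)) := by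
            rw [← mul_assoc _ b x, gA3 hw hsb]
      _ = ((w ^ k)⁻¹ * w⁻¹) • (b ^ k * (b * (gf' w a b * x))) := by
            rw [smul_mul_assoc, mul_smul_comm, smul_smul, mul_assoc]
      _ = ((w ^ (k+1))⁻¹) • (b ^ (k+1) * (gf' w a b * x)) := by
            rw [← mul_inv, ← pow_succ, ← mul_assoc (b ^ k), ← pow_succ]

lemma gP4 (m : ℕ) (x : A) :
    gf' w a b * (gf w a b ^ m * x) = gf w a b ^ m * (gf' w a b * x) := by
  rw [← mul_assoc, ((gcomm_ff' hw hsa hsb).pow_right m).eq, mul_assoc]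

lemma gcomm_fm_ab (m : ℕ) (x : A) :
    gf w a b ^ m * ((a * b) * x) = (a * b) * (gf w a b ^ m * x) := by
  have c : Commute (gf w a b) (a * b) := gcomm_f_ab hw hsa hsb
  rw [← mul_assoc, (c.pow_left m).eq, mul_assoc]

lemma gstep (k m : ℕ) :
    gf' w a b * (b ^ k * gf w a b ^ m * a ^ k)
      = ((1 - w^2) * w ^ m * (w ^ (k+1))⁻¹) • (b ^ (k+1) * gf w a b ^ m * a ^ (k+1))
        - ((w ^ (k+1))⁻¹) • (b ^ k * gf w a b ^ (m+1) * a ^ k) := by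
  have e1 : gf' w a b * a ^ k
      = (1 - w^2) • ((a * b) * a ^ k) - w • (gf w a b * a ^ k) := by
    rw [gA6 (w := w) (a := a) (b := b), sub_mul, smul_mul_assoc, smul_mul_assoc]
  have e4 : gf w a b ^ m * (gf w a b * a ^ k) = gf w a b ^ (m+1) * a ^ k := by
    rw [← mul_assoc, ← pow_succ (gf w a b) m]
  have e5 : (a * b) * (gf w a b ^ m * a ^ k)
      = w⁻¹ • (b * ((w ^ m) • (gf w a b ^ m * (a * a ^ k))))
        - w⁻¹ • (gf w a b ^ (m+1) * a ^ k) := by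
    rw [mul_assoc, gA5mul hw, gP1 hw hsa hsb, ← mul_assoc (gf w a b), ← pow_succ' (gf w a b) m]
  calc gf' w a b * (b ^ k * gf w a b ^ m * a ^ k)
      = gf' w a b * (b ^ k * (gf w a b ^ m * a ^ k)) := by rw [mul_assoc]
    _ = (w ^ k)⁻¹ • (b ^ k * (gf' w a b * (gf w a b ^ m * a ^ k))) := gP3 hw hsa hsb k _
    _ = (w ^ k)⁻¹ • (b ^ k * (gf w a b ^ m * (gf' w a b * a ^ k))) := by
          rw [gP4 hw hsa hsb]
    _ = (w ^ k)⁻¹ • (b ^ k * ((1 - w^2) • (gf w a b ^ m * ((a * b) * a ^ k))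
          - w • (gf w a b ^ (m+1) * a ^ k))) := by
          rw [e1, mul_sub, mul_smul_comm, mul_smul_comm, e4]
    _ = (w ^ k)⁻¹ • (b ^ k * ((1 - w^2) • ((w⁻¹ • (b * ((w ^ m) • (gf w a b ^ m * (a * a ^ k))))
          - w⁻¹ • (gf w a b ^ (m+1) * a ^ k)))
          - w • (gf w a b ^ (m+1) * a ^ k))) := by
          rw [gcomm_fm_ab hw hsa hsb, e5]
    _ = ((1 - w^2) * w ^ m * (w ^ (k+1))⁻¹) • (b ^ (k+1) * gf w a b ^ m * a ^ (k+1))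
        - ((w ^ (k+1))⁻¹) • (b ^ k * gf w a b ^ (m+1) * a ^ k) := by
          conv_rhs => rw [pow_succ b k, pow_succ' a k]
          simp only [mul_assoc, smul_sub, mul_sub, smul_smul, mul_smul_comm, smul_mul_assoc]
          match_scalars <;> field_simp
          · ring
          · ring

end Generic


/-! ### Scalar lemmas -/

lemma v_ne : v ≠ 0 := RatFunc.X_ne_zero

lemma vpow_ne (m : ℕ) : v ^ m ≠ 0 := pow_ne_zero _ v_ne

lemma vpow_ne_one (m : ℕ) (hm : m ≠ 0) : v ^ m ≠ 1 := by
  intro h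
  have : (Polynomial.X : Polynomial ℚ) ^ m = 1 := by
    apply RatFunc.algebraMap_injective ℚ
    simpa [map_pow, RatFunc.algebraMap_X, v] using h
  have := congrArg Polynomial.natDegree this
  simp [Polynomial.natDegree_X_pow] at this
  exact hm this

lemma key_ne (m : ℕ) (hm : m ≠ 0) : v ^ m - (v ^ m)⁻¹ ≠ 0 := by
  intro h
  have h1 : v ^ m * v ^ m = 1 := by
    have := sub_eq_zero.mp h
    field_simp [vpow_ne m] at this ⊢
    linear_combination this
  have : v ^ (m + m) = 1 := by rw [pow_add]; exact h1
  exact vpow_ne_one _ (by omega) this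

lemma vv_ne : v - v⁻¹ ≠ 0 := by simpa [pow_one] using key_ne 1 one_ne_zero

lemma qint_nat (m : ℕ) : qint m = (v ^ m - (v ^ m)⁻¹) / (v - v⁻¹) := by
  simp [qint, zpow_natCast, zpow_neg]

lemma qint_ne (m : ℕ) (hm : m ≠ 0) : qint m ≠ 0 :=
  by rw [qint_nat]; exact div_ne_zero (key_ne m hm) vv_ne

lemma qfact_ne (m : ℕ) : qfact m ≠ 0 := by
  apply Finset.prod_ne_zero_iff.mpr
  intro i _
  exact_mod_cast qint_ne (i+1) (by omega)

lemma qfact_zero : qfact 0 = 1 := by simp [qfact]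

lemma qfact_succ (m : ℕ) : qfact (m+1) = qfact m * qint (m+1) := by
  rw [qfact, Finset.prod_range_succ]; rfl

lemma qint_add (j k : ℕ) : qint ((j : ℤ) + (k : ℤ)) = v ^ j * qint k + (v ^ k)⁻¹ * qint j := by
  have h : ((j : ℤ) + (k : ℤ)) = ((j + k : ℕ) : ℤ) := by push_cast; ring
  rw [h, qint_nat, qint_nat, qint_nat, ← mul_div_assoc, ← mul_div_assoc, ← add_div]
  congr 1
  rw [pow_add]
  field_simp [vpow_ne j, vpow_ne k]
  ring

lemma qbinom_zero (n : ℕ) : qbinom n 0 = 1 := by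
  simp [qbinom, qfact_zero, div_self (qfact_ne n)]

lemma qbinom_self (n : ℕ) : qbinom n n = 1 := by
  simp [qbinom, qfact_zero, div_self (qfact_ne n)]

lemma qbinom_pascal (n k : ℕ) (h1 : 1 ≤ k) (h2 : k ≤ n) :
    qbinom (n+1) k = v ^ (n+1-k) * qbinom n (k-1) + (v ^ k)⁻¹ * qbinom n k := by
  obtain ⟨j, hj⟩ : ∃ j, n + 1 - k = j + 1 := ⟨n - k, by omega⟩
  obtain ⟨l, hl⟩ : ∃ l, k = l + 1 := ⟨n - j - 1, by omega⟩
  have qA : qint ((n:ℤ)+1) = v ^ (j+1) * qint k + (v ^ k)⁻¹ * qint ((j:ℤ)+1) := by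
    have h : ((n:ℤ)+1) = ((j+1 : ℕ) : ℤ) + (k : ℤ) := by push_cast; omega
    rw [h, qint_add (j+1) k]
    push_cast
    ring
  rw [hj]
  have hC : qfact k * qfact (j+1) ≠ 0 := mul_ne_zero (qfact_ne k) (qfact_ne (j+1))
  apply mul_right_cancel₀ hC
  have L : qbinom (n+1) k * (qfact k * qfact (j+1)) = qfact n * qint ((n:ℤ)+1) := by
    rw [qbinom, show n + 1 - k = j + 1 from hj, div_mul_cancel₀ _ hC, qfact_succ n]
  have R1 : qbinom n (k-1) * (qfact k * qfact (j+1)) = qfact n * qint k := by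
    rw [qbinom, show k - 1 = l by omega, show n - l = j + 1 by omega, hl, qfact_succ l,
      show ((l:ℤ)+1) = ((l:ℕ)+1:ℕ) by push_cast; ring]
    field_simp [qfact_ne l, qfact_ne (j+1)]
  have R2 : qbinom n k * (qfact k * qfact (j+1)) = qfact n * qint ((j:ℤ)+1) := by
    rw [qbinom, show n - k = j by omega,
      show qfact (j+1) = qfact j * qint ((j:ℤ)+1) from qfact_succ j]
    field_simp [qfact_ne j, qfact_ne k]
  rw [L, add_mul, mul_assoc, mul_assoc, R1, R2, qA]
  ring

lemma negv_ne : (-v) ≠ 0 := neg_ne_zero.mpr v_ne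

lemma negv_zpow_succ (n : ℕ) : (-v) ^ (-((n+1 : ℕ) : ℤ)) = (-v) ^ (-(n:ℤ)) * (-v)⁻¹ := by
  rw [show (-((n+1 : ℕ) : ℤ)) = (-(n:ℤ)) + (-1) by push_cast; ring, zpow_add₀ negv_ne, zpow_neg_one]

lemma Espec (k : ℕ) : 2 * ((-((k:ℤ)*((k:ℤ)-3)))/2) = -((k:ℤ)*((k:ℤ)-3)) := by
  obtain ⟨m, hm⟩ := Int.even_mul_succ_self (k:ℤ)
  have h2 : -((k:ℤ)*((k:ℤ)-3)) = 2 * (2*(k:ℤ) - m) := by linarith [hm]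
  rw [h2, Int.mul_ediv_cancel_left _ (by norm_num)]

lemma Esucc (k : ℕ) :
    (-((((k+1 : ℕ)):ℤ) * ((((k+1 : ℕ)):ℤ) - 3)))/2 = (-((k:ℤ)*((k:ℤ)-3)))/2 + (1 - (k:ℤ)) := by
  have h1 := Espec k
  have h2 := Espec (k+1)
  have h4 : 2 * ((-((((k+1 : ℕ)):ℤ) * ((((k+1 : ℕ)):ℤ) - 3)))/2)
      = 2 * ((-((k:ℤ)*((k:ℤ)-3)))/2 + (1 - (k:ℤ))) := by
    rw [h2, mul_add, h1]; push_cast; ring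
  exact mul_left_cancel₀ two_ne_zero h4

lemma vE_succ (k : ℕ) :
    v ^ ((-((((k+1 : ℕ)):ℤ) * ((((k+1 : ℕ)):ℤ) - 3)))/2) =
      v ^ ((-((k:ℤ)*((k:ℤ)-3)))/2) * (v * (v ^ k)⁻¹) := by
  rw [Esucc k, zpow_add₀ v_ne, show ((1:ℤ) - (k:ℤ)) = 1 + (-(k:ℤ)) by ring, zpow_add₀ v_ne,
    zpow_one, zpow_neg, zpow_natCast]

/-- The coefficient in the expansion. -/
def coef (n k : ℕ) : RatFunc ℚ :=
  (-v) ^ (-(n : ℤ)) * v ^ (-((k : ℤ) * ((k : ℤ) - 3)) / 2) * (v - v⁻¹) ^ k * qbinom n k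

lemma coef_zero_zero : coef 0 0 = 1 := by
  norm_num [coef, qbinom_zero]

lemma coef_succ_zero (n : ℕ) : coef (n+1) 0 = -(coef n 0 * (v ^ (0+1))⁻¹) := by
  rw [coef, coef, qbinom_zero, qbinom_zero, negv_zpow_succ, inv_neg]
  norm_num

lemma coef_succ_self (n : ℕ) :
    coef (n+1) (n+1) = coef n n * ((1 - v^2) * v^(n-n) * (v^(n+1))⁻¹) := by
  rw [coef, coef, qbinom_self, qbinom_self, negv_zpow_succ, vE_succ, Nat.sub_self, pow_succ _ n]
  field_simp [v_ne, vpow_ne n]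
  ring

lemma coef_mid (n l : ℕ) (h : l + 1 ≤ n) :
    coef (n+1) (l+1)
      = coef n l * ((1-v^2) * v^(n-l) * (v^(l+1))⁻¹) - coef n (l+1) * (v^(l+1+1))⁻¹ := by
  rw [coef, coef, coef, negv_zpow_succ, vE_succ,
    qbinom_pascal n (l+1) (by omega) h, show n + 1 - (l+1) = n - l by omega,
    show l + 1 - 1 = l by omega, pow_succ (v - v⁻¹) l, inv_neg, pow_succ v (l+1), pow_succ v l]
  generalize (-v) ^ (-(n:ℤ)) = X
  generalize v ^ (-((l:ℤ)*((l:ℤ)-3))/2) = Y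
  have hW := vpow_ne l
  generalize v ^ l = W at *
  generalize (v - v⁻¹) ^ l = P
  field_simp [v_ne, hW]
  ring

/-! ### Instantiation in U⁻ -/

lemma serre1 : Fα * Fα * Fβ + Fβ * Fα * Fα = (v + v⁻¹) • (Fα * Fβ * Fα) := by
  have := RingQuot.mkAlgHom_rel (S := RatFunc ℚ) Rel.serre₁
  simpa [Fα, Fβ, map_add, map_mul, map_smul] using this

lemma serre2 : Fβ * Fβ * Fα + Fα * Fβ * Fβ = (v + v⁻¹) • (Fβ * Fα * Fβ) := by
  have := RingQuot.mkAlgHom_rel (S := RatFunc ℚ) Rel.serre₂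
  simpa [Fα, Fβ, map_add, map_mul, map_smul] using this

lemma f2_eq : f₂ = gf v Fα Fβ := rfl
lemma f2'_eq : f₂' = gf' v Fα Fβ := rfl

lemma step (k m : ℕ) :
    f₂' * (Fβ ^ k * f₂ ^ m * Fα ^ k)
      = ((1 - v^2) * v ^ m * (v ^ (k+1))⁻¹) • (Fβ ^ (k+1) * f₂ ^ m * Fα ^ (k+1))
        - ((v ^ (k+1))⁻¹) • (Fβ ^ k * f₂ ^ (m+1) * Fα ^ k) := by
  rw [f2_eq, f2'_eq]
  exact gstep v_ne serre1 serre2 k m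

lemma aux : ∀ n : ℕ,
    f₂' ^ n = ∑ k ∈ Finset.range (n + 1), coef n k • (Fβ ^ k * f₂ ^ (n - k) * Fα ^ k) := by
  intro n
  induction n with
  | zero => simp [coef_zero_zero]
  | succ n ih =>
    have hS : f₂' ^ (n+1)
        = ∑ k ∈ Finset.range (n + 1),
            ((coef n k * ((1 - v^2) * v ^ (n-k) * (v ^ (k+1))⁻¹))
                • (Fβ ^ (k+1) * f₂ ^ ((n+1) - (k+1)) * Fα ^ (k+1))
              - (coef n k * (v ^ (k+1))⁻¹) • (Fβ ^ k * f₂ ^ ((n+1) - k) * Fα ^ k)) := by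
      rw [pow_succ', ih, Finset.mul_sum]
      refine Finset.sum_congr rfl fun k hk => ?_
      have hk' : k ≤ n := by simpa [Nat.lt_succ_iff] using hk
      rw [mul_smul_comm, step k (n - k), smul_sub, smul_smul, smul_smul,
        show n - k + 1 = n + 1 - k by omega, show (n+1) - (k+1) = n - k by omega]
    rw [hS, Finset.sum_sub_distrib]
    rw [Finset.sum_range_succ' (fun j => coef (n+1) j • (Fβ ^ j * f₂ ^ ((n+1) - j) * Fα ^ j)) (n+1)]
    rw [Finset.sum_range_succ (fun k => coef (n+1) (k+1) • (Fβ ^ (k+1) * f₂ ^ ((n+1) - (k+1)) * Fα ^ (k+1))) n]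
    rw [Finset.sum_range_succ (fun k => (coef n k * ((1 - v^2) * v ^ (n-k) * (v ^ (k+1))⁻¹))
          • (Fβ ^ (k+1) * f₂ ^ ((n+1) - (k+1)) * Fα ^ (k+1))) n]
    rw [Finset.sum_range_succ' (fun k => (coef n k * (v ^ (k+1))⁻¹) • (Fβ ^ k * f₂ ^ ((n+1) - k) * Fα ^ k)) n]
    have hmid : ∀ k ∈ Finset.range n,
        coef (n+1) (k+1) • (Fβ ^ (k+1) * f₂ ^ ((n+1) - (k+1)) * Fα ^ (k+1))
          = (coef n k * ((1 - v^2) * v ^ (n-k) * (v ^ (k+1))⁻¹))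
              • (Fβ ^ (k+1) * f₂ ^ ((n+1) - (k+1)) * Fα ^ (k+1))
            - (coef n (k+1) * (v ^ (k+1+1))⁻¹) • (Fβ ^ (k+1) * f₂ ^ ((n+1) - (k+1)) * Fα ^ (k+1)) := by
      intro k hk
      have hk' : k + 1 ≤ n := Finset.mem_range.mp hk
      rw [coef_mid n k hk']
      exact sub_smul (R := RatFunc ℚ) (M := Um) _ _ _
    have hzero : coef (n+1) 0 • (Fβ ^ 0 * f₂ ^ ((n+1) - 0) * Fα ^ 0)
        = -((coef n 0 * (v ^ (0+1))⁻¹) • (Fβ ^ 0 * f₂ ^ ((n+1) - 0) * Fα ^ 0)) := by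
      rw [coef_succ_zero n]
      exact neg_smul (R := RatFunc ℚ) (M := Um) _ _
    rw [Finset.sum_congr rfl hmid, Finset.sum_sub_distrib, coef_succ_self n, hzero]
    abel

theorem f₂'_pow :
    ∀ n : ℕ,
      f₂' ^ n = ∑ k ∈ Finset.range (n + 1),
        ((-v) ^ (-(n : ℤ)) * v ^ (-((k : ℤ) * ((k : ℤ) - 3)) / 2)
            * (v - v⁻¹) ^ k * qbinom n k) •
          (Fβ ^ k * f₂ ^ (n - k) * Fα ^ k) := by
  intro n
  simpa [coef] using aux n

end Stmt11
end
end

section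
/- If f : ℕ → ℚ(q) and g : ℕ → ℚ(q) are both q-holonomic sequences, then their pointwise sum f + g is a q-holonomic sequence. -/
noncomputable section

namespace StmtQH

/-- A sequence `f : ℕ → ℚ(q)` is q-holonomic if there are `d ∈ ℕ` and polynomials
`a₀, …, a_d ∈ ℚ(q)[x]`, not all zero, with `Σ_{i=0}^{d} a_i(qⁿ) f(n+i) = 0` for all `n`. -/
def IsQHolonomic (f : ℕ → RatFunc ℚ) : Prop :=
  ∃ (d : ℕ) (a : Fin (d + 1) → Polynomial (RatFunc ℚ)),
    (∃ i, a i ≠ 0) ∧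
    ∀ n : ℕ, ∑ i : Fin (d + 1), (a i).eval ((RatFunc.X : RatFunc ℚ) ^ n) * f (n + i) = 0

end StmtQH

namespace StmtQH

open Polynomial Filter

abbrev Kq := RatFunc ℚ
abbrev Fq := RatFunc Kq
abbrev Gg := Filter.Germ (Filter.atTop : Filter ℕ) Kq

def qq : Kq := RatFunc.X

def germHom : (ℕ → Kq) →+* Gg := Filter.Germ.coeRingHom _

lemma germHom_eq_coe (u : ℕ → Kq) : germHom u = (u : Gg) := rfl

lemma germHom_sum {ι : Type*} (s : Finset ι) (u : ι → ℕ → Kq) :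
    ∑ i ∈ s, germHom (u i) = germHom (fun n => ∑ i ∈ s, u i n) := by
  rw [← map_sum]; congr 1; funext n; simp

def ψ : Polynomial Kq →+* Gg :=
  germHom.comp (Pi.ringHom fun n => Polynomial.evalRingHom (qq ^ n))

lemma ψ_apply (p : Polynomial Kq) : ψ p = germHom (fun n => p.eval (qq ^ n)) := rfl

lemma qq_pow_injective : Function.Injective (fun n : ℕ => qq ^ n) := by
  intro m n h
  have h2 : (algebraMap (Polynomial ℚ) (RatFunc ℚ)) (X ^ m) = algebraMap (Polynomial ℚ) (RatFunc ℚ) (X ^ n) := by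
    simpa [map_pow, RatFunc.algebraMap_X, qq] using h
  have h3 := RatFunc.algebraMap_injective ℚ h2
  simpa using congrArg Polynomial.natDegree h3

lemma eventually_eval_ne {p : Polynomial Kq} (hp : p ≠ 0) :
    ∀ᶠ n in atTop, p.eval (qq ^ n) ≠ 0 := by
  have hfin : Set.Finite {n : ℕ | p.eval (qq ^ n) = 0} := by
    have := (Polynomial.finite_setOf_isRoot hp).preimage
      (Set.injOn_of_injective qq_pow_injective (f := fun n : ℕ => qq ^ n))
    simpa [Set.preimage, Polynomial.IsRoot] using this
  rw [← Nat.cofinite_eq_atTop]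
  exact hfin.compl_mem_cofinite

lemma isUnit_ψ {p : Polynomial Kq} (hp : p ≠ 0) : IsUnit (ψ p) := by
  refine IsUnit.of_mul_eq_one (germHom (fun n => (p.eval (qq ^ n))⁻¹)) ?_
  rw [ψ_apply, ← map_mul, germHom_eq_coe, show (1 : Gg) = ((1 : ℕ → Kq) : Gg) from rfl,
    Filter.Germ.coe_eq]
  filter_upwards [eventually_eval_ne hp] with n hn
  exact mul_inv_cancel₀ hn

def φ : Fq →+* Gg :=
  IsLocalization.lift (M := nonZeroDivisors (Polynomial Kq))
    (fun y => isUnit_ψ (nonZeroDivisors.ne_zero y.2))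

lemma φ_algebraMap (p : Polynomial Kq) : φ (algebraMap (Polynomial Kq) Fq p) = ψ p :=
  IsLocalization.lift_eq _ _

def sh (m : ℕ) (p : Polynomial Kq) : Polynomial Kq :=
  p.comp (Polynomial.C (qq ^ m) * Polynomial.X)

lemma sh_eval (m n : ℕ) (p : Polynomial Kq) : (sh m p).eval (qq ^ n) = p.eval (qq ^ (m + n)) := by
  simp [sh, Polynomial.eval_comp, pow_add]

lemma sh_ne_zero {p : Polynomial Kq} (m : ℕ) (hp : p ≠ 0) : sh m p ≠ 0 := by
  intro h
  apply hp
  have hq : qq ≠ 0 := RatFunc.X_ne_zero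
  have h2 : (sh m p).comp (Polynomial.C ((qq ^ m)⁻¹) * Polynomial.X) = p := by
    rw [sh, Polynomial.comp_assoc]
    simp only [Polynomial.mul_comp, Polynomial.C_comp, Polynomial.X_comp, ← mul_assoc,
      ← Polynomial.C_mul, mul_inv_cancel₀ (pow_ne_zero m hq), Polynomial.C_1, one_mul,
      Polynomial.comp_X]
  rw [h, Polynomial.zero_comp] at h2
  exact h2.symm

def sg (h : ℕ → Kq) (m : ℕ) : Gg := germHom (fun n => h (n + m))


lemma key {h : ℕ → Kq} (hh : IsQHolonomic h) :
    ∃ k : ℕ, ∀ m : ℕ, ∃ c : Fin k → Fq,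
      sg h m = ∑ i : Fin k, φ (c i) * sg h i := by
  classical
  obtain ⟨d, a, ⟨i0, hi0⟩, hrec⟩ := hh
  set b : ℕ → Polynomial Kq := fun i => if hi : i < d + 1 then a ⟨i, hi⟩ else 0 with hb
  set k := Nat.findGreatest (fun i => b i ≠ 0) d with hkdef
  have hbi0 : b i0 ≠ 0 := by simp [hb, i0.isLt, hi0, Nat.lt_succ_iff.mp i0.isLt]
  have hbk : b k ≠ 0 := by
    simpa [hkdef] using Nat.findGreatest_spec (P := fun i => b i ≠ 0)
      (Nat.lt_succ_iff.mp i0.isLt) hbi0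
  have hkd : k ≤ d := Nat.findGreatest_le d
  have hgt : ∀ i, k < i → b i = 0 := by
    intro i hik
    by_cases hid : i ≤ d
    · by_contra hne
      exact Nat.findGreatest_is_greatest (P := fun i => b i ≠ 0) hik hid hne
    · simp [hb, show ¬ i < d + 1 by omega, hid]
  -- recurrence over range (k+1)
  have hrec' : ∀ n, ∑ i ∈ Finset.range (k + 1), (b i).eval (qq ^ n) * h (n + i) = 0 := by
    intro n
    have h1 : ∑ i ∈ Finset.range (d + 1), (b i).eval (qq ^ n) * h (n + i) = 0 := by
      rw [← Fin.sum_univ_eq_sum_range (fun i => (b i).eval (qq ^ n) * h (n + i)) (d + 1)]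
      have := hrec n
      rw [← this]
      refine Finset.sum_congr rfl fun i _ => ?_
      simp [hb, qq, i.isLt, Nat.lt_succ_iff.mp i.isLt]
    rw [← h1]
    apply Finset.sum_subset
    · exact Finset.range_subset_range.mpr (by omega)
    · intro i _ hi
      have : k < i := by simp only [Finset.mem_range] at hi; omega
      simp [hgt i this]
  -- germ version of the recurrence at every shift
  have germrel : ∀ m', ∑ i ∈ Finset.range (k + 1), ψ (sh m' (b i)) * sg h (m' + i) = 0 := by
    intro m'
    have hfun : (fun n => ∑ i ∈ Finset.range (k + 1),
        (sh m' (b i)).eval (qq ^ n) * h (n + (m' + i))) = (0 : ℕ → Kq) := by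
      funext n
      simp only [Pi.zero_apply]
      rw [← hrec' (n + m')]
      refine Finset.sum_congr rfl fun i _ => ?_
      rw [sh_eval, Nat.add_comm m' n, ← Nat.add_assoc]
    calc ∑ i ∈ Finset.range (k + 1), ψ (sh m' (b i)) * sg h (m' + i)
        = ∑ i ∈ Finset.range (k + 1),
            germHom (fun n => (sh m' (b i)).eval (qq ^ n) * h (n + (m' + i))) := by
          refine Finset.sum_congr rfl fun i _ => ?_
          rw [ψ_apply, sg, ← map_mul]
          rfl
      _ = germHom (fun n => ∑ i ∈ Finset.range (k + 1),
            (sh m' (b i)).eval (qq ^ n) * h (n + (m' + i))) := germHom_sum _ _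
      _ = 0 := by rw [hfun, map_zero]
  refine ⟨k, fun m => ?_⟩
  induction m using Nat.strong_induction_on with
  | _ m IH =>
    by_cases hm : m < k
    · refine ⟨fun i => if i = ⟨m, hm⟩ then 1 else 0, ?_⟩
      rw [Finset.sum_eq_single (⟨m, hm⟩ : Fin k)]
      · simp
      · intro i _ hne
        simp [hne]
      · intro habs
        exact absurd (Finset.mem_univ _) habs
    · push_neg at hm
      set m' := m - k with hm'def
      have hmk : m' + k = m := Nat.sub_add_cancel hm
      have rel := germrel m'
      rw [Finset.sum_range_succ, hmk] at rel
      have hlead : ψ (sh m' (b k)) * sg h m =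
          - ∑ i ∈ Finset.range k, ψ (sh m' (b i)) * sg h (m' + i) := by
        linear_combination rel
      set r : Fq := (algebraMap (Polynomial Kq) Fq (sh m' (b k)))⁻¹ with hr
      have halg : algebraMap (Polynomial Kq) Fq (sh m' (b k)) ≠ 0 :=
        RatFunc.algebraMap_ne_zero (sh_ne_zero _ hbk)
      have hcancel : φ r * ψ (sh m' (b k)) = 1 := by
        rw [← φ_algebraMap, ← map_mul, hr, inv_mul_cancel₀ halg, map_one]
      have hsg : sg h m = ∑ i : Fin k,
          φ (-(r * algebraMap (Polynomial Kq) Fq (sh m' (b i)))) * sg h (m' + i) := by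
        calc sg h m = (φ r * ψ (sh m' (b k))) * sg h m := by rw [hcancel, one_mul]
          _ = φ r * (ψ (sh m' (b k)) * sg h m) := by ring
          _ = φ r * (- ∑ i ∈ Finset.range k, ψ (sh m' (b i)) * sg h (m' + i)) := by rw [hlead]
          _ = ∑ i ∈ Finset.range k,
              φ (-(r * algebraMap (Polynomial Kq) Fq (sh m' (b i)))) * sg h (m' + i) := by
            rw [mul_neg, Finset.mul_sum, ← Finset.sum_neg_distrib]
            refine Finset.sum_congr rfl fun i _ => ?_
            rw [map_neg, map_mul, φ_algebraMap]
            ring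
          _ = ∑ i : Fin k,
              φ (-(r * algebraMap (Polynomial Kq) Fq (sh m' (b i)))) * sg h (m' + i) :=
            (Fin.sum_univ_eq_sum_range _ k).symm
      choose cc hcc using fun (i : Fin k) => IH (m' + i) (by omega)
      refine ⟨fun j => ∑ i : Fin k,
        (-(r * algebraMap (Polynomial Kq) Fq (sh m' (b i)))) * cc i j, ?_⟩
      rw [hsg]
      calc ∑ i : Fin k, φ (-(r * algebraMap (Polynomial Kq) Fq (sh m' (b i)))) * sg h (m' + i)
          = ∑ i : Fin k, φ (-(r * algebraMap (Polynomial Kq) Fq (sh m' (b i)))) *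
              ∑ j : Fin k, φ (cc i j) * sg h j := by
            refine Finset.sum_congr rfl fun i _ => ?_
            rw [hcc i]
        _ = ∑ j : Fin k, φ (∑ i : Fin k,
              (-(r * algebraMap (Polynomial Kq) Fq (sh m' (b i)))) * cc i j) * sg h j := by
            simp only [map_sum, map_mul, map_neg, Finset.sum_mul, Finset.mul_sum]
            rw [Finset.sum_comm]
            refine Finset.sum_congr rfl fun j _ => Finset.sum_congr rfl fun i _ => by ring


set_option synthInstance.maxHeartbeats 1000000 in
set_option maxHeartbeats 1000000 in
theorem isQHolonomic_add (f g : ℕ → RatFunc ℚ)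
    (hf : IsQHolonomic f) (hg : IsQHolonomic g) :
    IsQHolonomic (fun n => f n + g n) := by
  classical
  obtain ⟨k1, h1⟩ := key hf
  obtain ⟨k2, h2⟩ := key hg
  choose cf hcf using h1
  choose cg hcg using h2
  set N := k1 + k2 with hN
  set β : Fin k1 ⊕ Fin k2 → Gg := Sum.elim (fun i => sg f i) (fun j => sg g j) with hβ
  set Cv : ℕ → Fin k1 ⊕ Fin k2 → Fq := fun m => Sum.elim (cf m) (cg m) with hCv
  have hst : ∀ m, sg (fun n => f n + g n) m = ∑ t : Fin k1 ⊕ Fin k2, φ (Cv m t) * β t := by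
    intro m
    have hadd : sg (fun n => f n + g n) m = sg f m + sg g m := by
      simp only [sg, ← map_add]
      rfl
    rw [hadd, hcf m, hcg m, Fintype.sum_sum_type]
    simp only [hCv, hβ, Sum.elim_inl, Sum.elim_inr]
  -- linear dependence of the coefficient vectors
  have hdep : ¬ LinearIndependent Fq (fun m : Fin (N + 1) => Cv m) := by
    intro hli
    have hle := hli.fintype_card_le_finrank
    rw [Module.finrank_pi] at hle
    simp only [Fintype.card_fin, Fintype.card_sum] at hle
    omega
  rw [Fintype.not_linearIndependent_iff] at hdep
  obtain ⟨r, hr0, m0, hrm0⟩ := hdep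
  -- germ relation with rational-function coefficients
  have hrel : ∑ m : Fin (N + 1), φ (r m) * sg (fun n => f n + g n) m = 0 := by
    calc ∑ m : Fin (N + 1), φ (r m) * sg (fun n => f n + g n) m
        = ∑ m : Fin (N + 1), φ (r m) * ∑ t : Fin k1 ⊕ Fin k2, φ (Cv m t) * β t :=
          Finset.sum_congr rfl fun m _ => by rw [hst m]
      _ = ∑ t : Fin k1 ⊕ Fin k2, φ (∑ m : Fin (N + 1), r m * Cv m t) * β t := by
          simp only [map_sum, map_mul, Finset.sum_mul, Finset.mul_sum]
          rw [Finset.sum_comm]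
          exact Finset.sum_congr rfl fun t _ => Finset.sum_congr rfl fun m _ => by ring
      _ = 0 := by
          have hz : ∀ t, (∑ m : Fin (N + 1), r m * Cv m t) = 0 := by
            intro t
            have := congrFun hr0 t
            simpa [Finset.sum_apply, Pi.smul_apply, smul_eq_mul] using this
          simp [hz]
  -- clear denominators
  set D : Fin (N + 1) → Polynomial Kq :=
    fun m => (r m).num * ∏ j ∈ Finset.univ.erase m, (r j).denom with hD
  have hDalg : ∀ m, algebraMap (Polynomial Kq) Fq (D m) =
      r m * algebraMap (Polynomial Kq) Fq (∏ j : Fin (N + 1), (r j).denom) := by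
    intro m
    have hnum : r m * algebraMap (Polynomial Kq) Fq ((r m).denom) =
        algebraMap (Polynomial Kq) Fq ((r m).num) := by
      have hd : algebraMap (Polynomial Kq) Fq ((r m).denom) ≠ 0 :=
        RatFunc.algebraMap_ne_zero (RatFunc.denom_ne_zero (r m))
      have hnd := RatFunc.num_div_denom (r m)
      rw [div_eq_iff hd] at hnd
      exact hnd.symm
    rw [hD]
    simp only [map_mul, map_prod]
    rw [← Finset.mul_prod_erase Finset.univ
      (fun j => algebraMap (Polynomial Kq) Fq ((r j).denom)) (Finset.mem_univ m),
      ← mul_assoc, hnum]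
  have hDne : D m0 ≠ 0 := by
    rw [hD]
    exact mul_ne_zero (RatFunc.num_ne_zero hrm0)
      (Finset.prod_ne_zero_iff.mpr fun j _ => RatFunc.denom_ne_zero _)
  have hrel2 : ∑ m : Fin (N + 1), ψ (D m) * sg (fun n => f n + g n) m = 0 := by
    calc ∑ m : Fin (N + 1), ψ (D m) * sg (fun n => f n + g n) m
        = φ (algebraMap (Polynomial Kq) Fq (∏ j : Fin (N + 1), (r j).denom)) *
            ∑ m : Fin (N + 1), φ (r m) * sg (fun n => f n + g n) m := by
          rw [Finset.mul_sum]
          refine Finset.sum_congr rfl fun m _ => ?_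
          rw [← φ_algebraMap, hDalg m, map_mul]
          ring
      _ = 0 := by rw [hrel, mul_zero]
  -- extract an eventual pointwise identity
  have hev : ∀ᶠ n in atTop,
      ∑ m : Fin (N + 1), (D m).eval (qq ^ n) * (f (n + m) + g (n + m)) = 0 := by
    have hco : germHom (fun n => ∑ m : Fin (N + 1),
        (D m).eval (qq ^ n) * (f (n + m) + g (n + m))) = 0 := by
      rw [← germHom_sum Finset.univ
        (fun (m : Fin (N + 1)) n => (D m).eval (qq ^ n) * (f (n + m) + g (n + m)))]
      rw [← hrel2]
      refine Finset.sum_congr rfl fun m _ => ?_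
      rw [ψ_apply, sg, ← map_mul]
      rfl
    have : (fun n => ∑ m : Fin (N + 1), (D m).eval (qq ^ n) * (f (n + m) + g (n + m)))
        =ᶠ[atTop] (0 : ℕ → Kq) := by
      rw [← Filter.Germ.coe_eq]
      exact hco
    filter_upwards [this] with n hn
    simpa using hn
  obtain ⟨M, hM⟩ := Filter.eventually_atTop.mp hev
  -- final witnesses
  refine ⟨N, fun m => D m * ∏ t ∈ Finset.range M, (Polynomial.X - Polynomial.C (qq ^ t)),
    ⟨m0, mul_ne_zero hDne (Polynomial.monic_prod_of_monic _ _
      fun t _ => Polynomial.monic_X_sub_C _).ne_zero⟩, ?_⟩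
  intro n
  show ∑ i : Fin (N + 1), (D i * ∏ t ∈ Finset.range M,
      (Polynomial.X - Polynomial.C (qq ^ t))).eval (qq ^ n) * (f (n + i) + g (n + i)) = 0
  simp only [Polynomial.eval_mul]
  by_cases hn : M ≤ n
  · calc ∑ i : Fin (N + 1), (D i).eval (qq ^ n) *
          (∏ t ∈ Finset.range M, (Polynomial.X - Polynomial.C (qq ^ t))).eval (qq ^ n) *
          (f (n + i) + g (n + i))
        = (∏ t ∈ Finset.range M, (Polynomial.X - Polynomial.C (qq ^ t))).eval (qq ^ n) *
            ∑ m : Fin (N + 1), (D m).eval (qq ^ n) * (f (n + m) + g (n + m)) := by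
          rw [Finset.mul_sum]
          exact Finset.sum_congr rfl fun i _ => by ring
      _ = 0 := by rw [hM n hn, mul_zero]
  · have hzero : (∏ t ∈ Finset.range M,
        (Polynomial.X - Polynomial.C (qq ^ t))).eval (qq ^ n) = 0 := by
      rw [Polynomial.eval_prod]
      refine Finset.prod_eq_zero (i := n) (Finset.mem_range.mpr (by omega)) ?_
      simp
    simp only [hzero, mul_zero, zero_mul, Finset.sum_const_zero]


end StmtQH
end
end
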